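/- arXiv:0807.2627 — 6 statements merged into one kernel-verified Lean document; each statement's English description precedes it below -/
import Mathlib

section
/- Let α ∈ (0,1), N ≥ 2, and let ν be the measure on ℝ^N with density |z|^{-N-α}. For every unit vector e ∈ ℝ^N and every r > 0, the set P(r,e) = { z ∈ B : r |z·e| ≤ |z - (z·e)e|² } (where B is the unit ball) has finite ν-measure, and r · ν(P(r,e)) → 0 as r → 0, uniformly in e. -/
open MeasureTheory Metric Filter Set
open scoped ENNReal Topology RealInnerProductSpace

lemma aux_min_le {a b θ : ℝ} (ha : 0 ≤ a) (hb : 0 ≤ b) (h0 : 0 ≤ θ) (h1 : θ ≤ 1) :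
    min a b ≤ a ^ (1-θ) * b ^ θ := by
  rcases le_total a b with h | h
  · rw [min_eq_left h]
    calc a = a ^ ((1-θ) + θ) := by rw [sub_add_cancel, Real.rpow_one]
    _ = a ^ (1-θ) * a ^ θ := Real.rpow_add' ha (by norm_num)
    _ ≤ a ^ (1-θ) * b ^ θ := by
        exact mul_le_mul_of_nonneg_left (Real.rpow_le_rpow ha h h0)
          (Real.rpow_nonneg ha _)
  · rw [min_eq_right h]
    calc b = b ^ ((1-θ) + θ) := by rw [sub_add_cancel, Real.rpow_one]
    _ = b ^ (1-θ) * b ^ θ := Real.rpow_add' hb (by norm_num)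
    _ ≤ a ^ (1-θ) * b ^ θ := by
        exact mul_le_mul_of_nonneg_right (Real.rpow_le_rpow hb h (by linarith))
          (Real.rpow_nonneg hb _)

lemma aux_real_ineq (N : ℕ) (hN : 2 ≤ N) (α θ r : ℝ)
    (hθ0 : 0 ≤ θ) (hθ1 : θ ≤ 1) (hr : 0 < r) (k : ℕ) :
    ((2:ℝ)⁻¹^(k+1)) ^ (-(N:ℝ)-α) *
      (2 * min ((2:ℝ)⁻¹^k) (((2:ℝ)⁻¹^k)^2 / r) * (2 * (2:ℝ)⁻¹^k)^(N-1))
      ≤ ((2:ℝ)^(2*(N:ℝ)+α) * r^(-θ)) * ((2:ℝ)^(α-θ))^k := by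
  have hρ : ∀ m : ℕ, (2:ℝ)⁻¹^m = (2:ℝ)^(-(m:ℝ)) := fun m => by
    rw [Real.rpow_neg (by norm_num), Real.rpow_natCast, inv_pow]
  have hρpos : (0:ℝ) < (2:ℝ)⁻¹^k := by positivity
  have hδ : min ((2:ℝ)⁻¹^k) (((2:ℝ)⁻¹^k)^2 / r) ≤ ((2:ℝ)⁻¹^k)^((1:ℝ)+θ) * r^(-θ) := by
    calc min ((2:ℝ)⁻¹^k) (((2:ℝ)⁻¹^k)^2 / r)
        ≤ ((2:ℝ)⁻¹^k)^(1-θ) * (((2:ℝ)⁻¹^k)^2 / r)^θ :=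
          aux_min_le hρpos.le (by positivity) hθ0 hθ1
      _ = ((2:ℝ)⁻¹^k)^((1:ℝ)+θ) * r^(-θ) := by
          rw [Real.div_rpow (by positivity) hr.le, ← Real.rpow_natCast ((2:ℝ)⁻¹^k) 2,
            ← Real.rpow_mul hρpos.le, div_eq_mul_inv, ← Real.rpow_neg hr.le,
            ← mul_assoc, ← Real.rpow_add hρpos]
          congr 1
          push_cast
          ring
  have hmono : ((2:ℝ)⁻¹^(k+1)) ^ (-(N:ℝ)-α) *
      (2 * min ((2:ℝ)⁻¹^k) (((2:ℝ)⁻¹^k)^2 / r) * (2 * (2:ℝ)⁻¹^k)^(N-1))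
      ≤ ((2:ℝ)⁻¹^(k+1)) ^ (-(N:ℝ)-α) *
      (2 * (((2:ℝ)⁻¹^k)^((1:ℝ)+θ) * r^(-θ)) * (2 * (2:ℝ)⁻¹^k)^(N-1)) := by
    have h1 : (0:ℝ) ≤ ((2:ℝ)⁻¹^(k+1)) ^ (-(N:ℝ)-α) := Real.rpow_nonneg (by positivity) _
    have h2 : (0:ℝ) ≤ (2 * (2:ℝ)⁻¹^k)^(N-1) := by positivity
    gcongr
  refine hmono.trans (le_of_eq ?_)
  have h2ρ : (2:ℝ) * (2:ℝ)⁻¹^k = (2:ℝ)^((1:ℝ) + -(k:ℝ)) := by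
    rw [hρ k, Real.rpow_add two_pos, Real.rpow_one]
  rw [h2ρ, hρ (k+1), hρ k,
    ← Real.rpow_natCast ((2:ℝ)^((1:ℝ) + -(k:ℝ))) (N-1), ← Real.rpow_mul (by norm_num),
    ← Real.rpow_natCast ((2:ℝ)^(α-θ)) k, ← Real.rpow_mul (by norm_num),
    ← Real.rpow_mul (by norm_num), ← Real.rpow_mul (by norm_num)]
  have collect : (2:ℝ)^(-((k+1:ℕ):ℝ) * (-(N:ℝ)-α)) * 2 * (2:ℝ)^(-(k:ℝ) * ((1:ℝ)+θ))
      * (2:ℝ)^(((1:ℝ) + -(k:ℝ)) * ((N-1:ℕ):ℝ))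
      = (2:ℝ)^(2*(N:ℝ)+α) * (2:ℝ)^((α-θ) * (k:ℝ)) := by
    rw [← Real.rpow_add_one (by norm_num : (2:ℝ) ≠ 0), ← Real.rpow_add two_pos,
      ← Real.rpow_add two_pos, ← Real.rpow_add two_pos]
    congr 1
    push_cast [Nat.cast_sub (by omega : 1 ≤ N)]
    ring
  linear_combination r^(-θ) * collect

lemma aux_coord_le {N : ℕ} (z : EuclideanSpace ℝ (Fin N)) (i : Fin N) : |z i| ≤ ‖z‖ := by
  rw [EuclideanSpace.norm_eq]
  have h1 : |z i| = Real.sqrt (‖z i‖ ^ 2) := by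
    rw [Real.sqrt_sq_eq_abs, Real.norm_eq_abs, abs_abs]
  rw [h1]
  exact Real.sqrt_le_sqrt (Finset.single_le_sum (fun j _ => sq_nonneg ‖z j‖) (Finset.mem_univ i))

lemma aux_box_volume {N : ℕ} (b : Fin N → ℝ) :
    volume {z : EuclideanSpace ℝ (Fin N) | ∀ i, z i ∈ Icc (-(b i)) (b i)} =
      ∏ i, ENNReal.ofReal (2 * b i) := by
  have hbox : {z : EuclideanSpace ℝ (Fin N) | ∀ i, z i ∈ Icc (-(b i)) (b i)} =
      (MeasurableEquiv.toLp 2 (Fin N → ℝ)).symm ⁻¹'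
        (Set.univ.pi fun i => Icc (-(b i)) (b i)) := by
    ext z
    simp [Set.mem_pi, Pi.le_def, forall_and]
  rw [hbox, (EuclideanSpace.volume_preserving_symm_measurableEquiv_toLp (Fin N)).measure_preimage
    ((MeasurableSet.univ_pi fun i => measurableSet_Icc).nullMeasurableSet),
    volume_pi_pi]
  refine Finset.prod_congr rfl fun i _ => ?_
  rw [Real.volume_Icc]
  congr 1
  ring

lemma aux_isometry_measure {N : ℕ} (d : ℝ → ℝ≥0∞)
    (f : EuclideanSpace ℝ (Fin N) ≃ₗᵢ[ℝ] EuclideanSpace ℝ (Fin N))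
    (s : Set (EuclideanSpace ℝ (Fin N))) (hs : MeasurableSet s) :
    volume.withDensity (fun z => d ‖z‖) (f ⁻¹' s) =
      volume.withDensity (fun z => d ‖z‖) s := by
  rw [withDensity_apply _ (hs.preimage f.continuous.measurable), withDensity_apply _ hs]
  have h := (f.measurePreserving).setLIntegral_comp_preimage_emb
    (f.toHomeomorph.measurableEmbedding) (fun z => d ‖z‖) s
  simpa only [f.norm_map] using h

/-- For `ν(dz) = |z|^{-N-α} dz` with `α ∈ (0,1)` and `N ≥ 2`, the parabolic region
`P(r,e) = { z ∈ B : r|z·e| ≤ |z - (z·e)e|² }` has finite `ν`-measure, and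
`r · ν(P(r,e)) → 0` as `r → 0`, uniformly in the unit vector `e`. -/
theorem fractional_kernel_parabolic_region (N : ℕ) (hN : 2 ≤ N) (α : ℝ)
    (hα : α ∈ Set.Ioo (0:ℝ) 1)
    (ν : Measure (EuclideanSpace ℝ (Fin N)))
    (hν : ν = volume.withDensity fun z => ENNReal.ofReal (‖z‖ ^ (-(N:ℝ) - α)))
    (P : ℝ → EuclideanSpace ℝ (Fin N) → Set (EuclideanSpace ℝ (Fin N)))
    (hP : ∀ r e, P r e = {z ∈ Metric.ball (0 : EuclideanSpace ℝ (Fin N)) 1 |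
        r * |⟪z, e⟫| ≤ ‖z - ⟪z, e⟫ • e‖ ^ 2}) :
    (∀ r : ℝ, 0 < r → ∀ e : EuclideanSpace ℝ (Fin N), ‖e‖ = 1 → ν (P r e) < ⊤) ∧
    (∀ ε : ℝ, 0 < ε → ∃ r₀ > (0:ℝ), ∀ r : ℝ, 0 < r → r < r₀ →
      ∀ e : EuclideanSpace ℝ (Fin N), ‖e‖ = 1 →
        ENNReal.ofReal r * ν (P r e) < ENNReal.ofReal ε) := by
  obtain ⟨hα0, hα1⟩ := hα
  haveI : Nonempty (Fin N) := ⟨⟨0, by omega⟩⟩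
  set i₀ : Fin N := ⟨0, by omega⟩ with hi₀
  set e₀ : EuclideanSpace ℝ (Fin N) := EuclideanSpace.single i₀ (1:ℝ) with he₀def
  have he₀ : ‖e₀‖ = 1 := by rw [he₀def, EuclideanSpace.norm_single]; norm_num
  set θ : ℝ := (1+α)/2 with hθdef
  have hθ0 : 0 ≤ θ := by rw [hθdef]; linarith
  have hθ1 : θ ≤ 1 := by rw [hθdef]; linarith
  have hαθ : α - θ < 0 := by rw [hθdef]; linarith
  have hq0 : (0:ℝ) < (2:ℝ)^(α-θ) := Real.rpow_pos_of_pos two_pos _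
  have hq1 : (2:ℝ)^(α-θ) < 1 := Real.rpow_lt_one_of_one_lt_of_neg one_lt_two hαθ
  set K : ℝ := (2:ℝ)^(2*(N:ℝ)+α) * (1 - (2:ℝ)^(α-θ))⁻¹ with hKdef
  have hK0 : 0 < K := by
    apply mul_pos (Real.rpow_pos_of_pos two_pos _)
    rw [inv_pos]; linarith
  -- measurability of P r e
  have hPm : ∀ r e, MeasurableSet (P r e) := by
    intro r e
    rw [hP]
    have hc : Continuous fun z : EuclideanSpace ℝ (Fin N) => ⟪z, e⟫ :=
      continuous_id.inner continuous_const
    exact measurableSet_ball.inter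
      (measurableSet_le (continuous_const.mul hc.abs).measurable
        (((continuous_id.sub (hc.smul continuous_const)).norm.pow 2).measurable))
  have hinner : ∀ z : EuclideanSpace ℝ (Fin N), ⟪z, e₀⟫ = z i₀ := by
    intro z
    rw [he₀def]
    simp [EuclideanSpace.inner_single_right]
  -- the key uniform bound
  have key : ∀ r : ℝ, 0 < r → ∀ e : EuclideanSpace ℝ (Fin N), ‖e‖ = 1 →
      ν (P r e) ≤ ENNReal.ofReal (K * r ^ (-θ)) := by
    intro r hr e he
    -- reduce to e₀ by a rotation
    obtain ⟨f, hf⟩ : ∃ f : EuclideanSpace ℝ (Fin N) ≃ₗᵢ[ℝ] EuclideanSpace ℝ (Fin N),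
        f e₀ = e := ⟨Submodule.reflection (ℝ ∙ (e₀ - e))ᗮ, Submodule.reflection_sub (by rw [he₀, he])⟩
    have hpre : f ⁻¹' (P r e) = P r e₀ := by
      rw [hP, hP]
      ext z
      have h1 : ⟪f z, e⟫ = ⟪z, e₀⟫ := by rw [← hf, LinearIsometryEquiv.inner_map_map]
      have h2 : ‖f z - ⟪f z, e⟫ • e‖ = ‖z - ⟪z, e₀⟫ • e₀‖ := by
        rw [h1, ← hf, ← LinearIsometryEquiv.map_smul, ← LinearIsometryEquiv.map_sub,
          f.norm_map]
      simp only [mem_preimage, mem_setOf_eq, mem_ball_zero_iff, f.norm_map]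
      rw [h2, h1]
    have hνP : ν (P r e) = ν (P r e₀) := by
      calc ν (P r e) = ν (f ⁻¹' (P r e)) := by
            rw [hν]
            exact (aux_isometry_measure (fun t => ENNReal.ofReal (t ^ (-(N:ℝ)-α))) f
              (P r e) (hPm r e)).symm
      _ = ν (P r e₀) := by rw [hpre]
    rw [hνP]
    -- annuli
    have hcover : P r e₀ ⊆ {0} ∪ ⋃ k : ℕ, (P r e₀ ∩
        {z | (2:ℝ)⁻¹^(k+1) ≤ ‖z‖ ∧ ‖z‖ < (2:ℝ)⁻¹^k}) := by
      intro z hz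
      by_cases hz0 : z = 0
      · exact Or.inl hz0
      · have hzb : ‖z‖ < 1 := by
          rw [hP] at hz; exact mem_ball_zero_iff.1 hz.1
        have hzpos : 0 < ‖z‖ := norm_pos_iff.2 hz0
        have hex : ∃ n : ℕ, (2:ℝ)⁻¹^(n+1) ≤ ‖z‖ := by
          obtain ⟨n, hn⟩ := exists_pow_lt_of_lt_one hzpos (by norm_num : (2:ℝ)⁻¹ < 1)
          exact ⟨n, le_of_lt (lt_of_le_of_lt
            (pow_le_pow_of_le_one (by norm_num) (by norm_num) (Nat.le_succ n)) hn)⟩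
        have hlt : ‖z‖ < (2:ℝ)⁻¹ ^ (Nat.find hex) := by
          rcases Nat.eq_zero_or_pos (Nat.find hex) with h0 | hpos
          · rw [h0, pow_zero]; exact hzb
          · have hmin := Nat.find_min hex (Nat.pred_lt hpos.ne')
            rw [← Nat.succ_pred_eq_of_pos hpos]
            exact not_le.1 hmin
        exact Or.inr (mem_iUnion.2 ⟨Nat.find hex, hz, Nat.find_spec hex, hlt⟩)
    have hν0 : ν ({0} : Set (EuclideanSpace ℝ (Fin N))) = 0 := by
      rw [hν, withDensity_apply _ (measurableSet_singleton 0)]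
      exact setLIntegral_measure_zero _ _ (measure_singleton 0)
    -- per-annulus bound
    have hterm : ∀ k : ℕ, ν (P r e₀ ∩ {z | (2:ℝ)⁻¹^(k+1) ≤ ‖z‖ ∧ ‖z‖ < (2:ℝ)⁻¹^k})
        ≤ ENNReal.ofReal ((2:ℝ)^(2*(N:ℝ)+α) * r^(-θ)) *
          ENNReal.ofReal ((2:ℝ)^(α-θ)) ^ k := by
      intro k
      set δ : ℝ := min ((2:ℝ)⁻¹^k) (((2:ℝ)⁻¹^k)^2 / r) with hδdef
      have hδ0 : 0 < δ := lt_min (by positivity) (by positivity)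
      set b : Fin N → ℝ := fun i => if i = i₀ then δ else (2:ℝ)⁻¹^k with hbdef
      have hMS : MeasurableSet (P r e₀ ∩ {z | (2:ℝ)⁻¹^(k+1) ≤ ‖z‖ ∧ ‖z‖ < (2:ℝ)⁻¹^k}) :=
        (hPm r e₀).inter ((measurableSet_le measurable_const measurable_norm).inter
          (measurableSet_lt measurable_norm measurable_const))
      have hsubBox : P r e₀ ∩ {z | (2:ℝ)⁻¹^(k+1) ≤ ‖z‖ ∧ ‖z‖ < (2:ℝ)⁻¹^k} ⊆
          {z : EuclideanSpace ℝ (Fin N) | ∀ i, z i ∈ Icc (-(b i)) (b i)} := by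
        rintro z ⟨hzP, hzA⟩
        rw [hP] at hzP
        obtain ⟨hz1, hz2⟩ := hzP
        obtain ⟨hA1, hA2⟩ := hzA
        intro i
        have hzk : ‖z‖ ≤ (2:ℝ)⁻¹^k := hA2.le
        refine mem_Icc.2 (abs_le.1 ?_)
        by_cases hii : i = i₀
        · rw [hii]
          have hb : b i₀ = δ := by rw [hbdef]; simp
          rw [hb, hδdef]
          refine le_min ((aux_coord_le z i₀).trans hzk) ?_
          rw [le_div_iff₀ hr]
          have hproj : ‖z - ⟪z, e₀⟫ • e₀‖ ^ 2 ≤ ‖z‖ ^ 2 := by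
            have heq : ‖z - ⟪z, e₀⟫ • e₀‖ ^ 2 = ‖z‖ ^ 2 - ⟪z, e₀⟫ ^ 2 := by
              rw [norm_sub_sq_real, real_inner_smul_right, norm_smul, he₀,
                Real.norm_eq_abs, mul_pow, sq_abs]
              ring
            rw [heq]
            nlinarith [sq_nonneg ⟪z, e₀⟫]
          have hnorm2 : ‖z‖ ^ 2 ≤ ((2:ℝ)⁻¹^k) ^ 2 :=
            pow_le_pow_left₀ (norm_nonneg z) hzk 2
          have := hz2.trans (hproj.trans hnorm2)
          rw [hinner z] at this
          linarith [this, mul_comm r |z i₀|]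
        · have hb : b i = (2:ℝ)⁻¹^k := by rw [hbdef]; simp [hii]
          rw [hb]
          exact (aux_coord_le z i).trans hzk
      have hprod : (∏ i, ENNReal.ofReal (2 * b i)) =
          ENNReal.ofReal (2*δ) * ENNReal.ofReal (2*(2:ℝ)⁻¹^k) ^ (N-1) := by
        have hfun : ∀ i, ENNReal.ofReal (2 * b i) =
            if i = i₀ then ENNReal.ofReal (2*δ) else ENNReal.ofReal (2*(2:ℝ)⁻¹^k) := by
          intro i; rw [hbdef]; by_cases h : i = i₀ <;> simp [h]
        rw [Finset.prod_congr rfl fun i _ => hfun i,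
          ← Finset.mul_prod_erase Finset.univ _ (Finset.mem_univ i₀), if_pos rfl]
        congr 1
        rw [Finset.prod_congr rfl fun i hi => if_neg (Finset.mem_erase.1 hi).1,
          Finset.prod_const, Finset.card_erase_of_mem (Finset.mem_univ i₀),
          Finset.card_univ, Fintype.card_fin]
      calc ν (P r e₀ ∩ {z | (2:ℝ)⁻¹^(k+1) ≤ ‖z‖ ∧ ‖z‖ < (2:ℝ)⁻¹^k})
          = ∫⁻ z in P r e₀ ∩ {z | (2:ℝ)⁻¹^(k+1) ≤ ‖z‖ ∧ ‖z‖ < (2:ℝ)⁻¹^k},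
            ENNReal.ofReal (‖z‖ ^ (-(N:ℝ) - α)) := by rw [hν, withDensity_apply _ hMS]
        _ ≤ ∫⁻ _z in P r e₀ ∩ {z | (2:ℝ)⁻¹^(k+1) ≤ ‖z‖ ∧ ‖z‖ < (2:ℝ)⁻¹^k},
            ENNReal.ofReal (((2:ℝ)⁻¹^(k+1)) ^ (-(N:ℝ) - α)) := by
            refine setLIntegral_mono measurable_const fun z hz => ?_
            refine ENNReal.ofReal_le_ofReal
              (Real.rpow_le_rpow_of_nonpos (by positivity) hz.2.1 ?_)
            have : (0:ℝ) ≤ (N:ℝ) := Nat.cast_nonneg N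
            linarith
        _ = ENNReal.ofReal (((2:ℝ)⁻¹^(k+1)) ^ (-(N:ℝ) - α)) *
            volume (P r e₀ ∩ {z | (2:ℝ)⁻¹^(k+1) ≤ ‖z‖ ∧ ‖z‖ < (2:ℝ)⁻¹^k}) :=
            setLIntegral_const _ _
        _ ≤ ENNReal.ofReal (((2:ℝ)⁻¹^(k+1)) ^ (-(N:ℝ) - α)) *
            volume {z : EuclideanSpace ℝ (Fin N) | ∀ i, z i ∈ Icc (-(b i)) (b i)} :=
            mul_le_mul_right (measure_mono hsubBox) _
        _ = ENNReal.ofReal (((2:ℝ)⁻¹^(k+1)) ^ (-(N:ℝ) - α) *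
            (2 * δ * (2 * (2:ℝ)⁻¹^k)^(N-1))) := by
            rw [aux_box_volume, hprod, ← ENNReal.ofReal_pow (by positivity),
              ← ENNReal.ofReal_mul (by positivity), ← ENNReal.ofReal_mul (by positivity)]
        _ ≤ ENNReal.ofReal (((2:ℝ)^(2*(N:ℝ)+α) * r^(-θ)) * ((2:ℝ)^(α-θ))^k) := by
            refine ENNReal.ofReal_le_ofReal ?_
            rw [hδdef]
            exact aux_real_ineq N hN α θ r hθ0 hθ1 hr k
        _ = ENNReal.ofReal ((2:ℝ)^(2*(N:ℝ)+α) * r^(-θ)) *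
            ENNReal.ofReal ((2:ℝ)^(α-θ)) ^ k := by
            rw [ENNReal.ofReal_mul (by positivity), ENNReal.ofReal_pow (by positivity)]
    -- sum up
    calc ν (P r e₀) ≤ ν ({0} ∪ ⋃ k : ℕ, (P r e₀ ∩
          {z | (2:ℝ)⁻¹^(k+1) ≤ ‖z‖ ∧ ‖z‖ < (2:ℝ)⁻¹^k})) := measure_mono hcover
      _ ≤ ν ({0} : Set (EuclideanSpace ℝ (Fin N))) + ν (⋃ k : ℕ, (P r e₀ ∩
          {z | (2:ℝ)⁻¹^(k+1) ≤ ‖z‖ ∧ ‖z‖ < (2:ℝ)⁻¹^k})) := measure_union_le _ _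
      _ ≤ 0 + ∑' k : ℕ, ν (P r e₀ ∩
          {z | (2:ℝ)⁻¹^(k+1) ≤ ‖z‖ ∧ ‖z‖ < (2:ℝ)⁻¹^k}) :=
          add_le_add (le_of_eq hν0) (measure_iUnion_le _)
      _ = ∑' k : ℕ, ν (P r e₀ ∩
          {z | (2:ℝ)⁻¹^(k+1) ≤ ‖z‖ ∧ ‖z‖ < (2:ℝ)⁻¹^k}) := zero_add _
      _ ≤ ∑' k : ℕ, ENNReal.ofReal ((2:ℝ)^(2*(N:ℝ)+α) * r^(-θ)) *
          ENNReal.ofReal ((2:ℝ)^(α-θ)) ^ k := ENNReal.tsum_le_tsum hterm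
      _ = ENNReal.ofReal ((2:ℝ)^(2*(N:ℝ)+α) * r^(-θ)) *
          (1 - ENNReal.ofReal ((2:ℝ)^(α-θ)))⁻¹ := by
          rw [ENNReal.tsum_mul_left, ENNReal.tsum_geometric]
      _ = ENNReal.ofReal (K * r ^ (-θ)) := by
          rw [← ENNReal.ofReal_one, ← ENNReal.ofReal_sub _ hq0.le,
            ← ENNReal.ofReal_inv_of_pos (by linarith), ← ENNReal.ofReal_mul (by positivity)]
          congr 1
          rw [hKdef]
          ring
  constructor
  · intro r hr e he
    exact lt_of_le_of_lt (key r hr e he) ENNReal.ofReal_lt_top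
  · intro ε hε
    refine ⟨min 1 ((ε/(2*K))^((2:ℝ)/(1-α))),
      lt_min one_pos (Real.rpow_pos_of_pos (by positivity) _), ?_⟩
    intro r hr hrlt e he
    have hb := key r hr e he
    have hne : (1:ℝ) - α ≠ 0 := by linarith
    have h1θ : (1:ℝ) - θ = (1-α)/2 := by rw [hθdef]; ring
    calc ENNReal.ofReal r * ν (P r e)
        ≤ ENNReal.ofReal r * ENNReal.ofReal (K * r ^ (-θ)) := mul_le_mul_right hb _
      _ = ENNReal.ofReal (K * r ^ ((1:ℝ) - θ)) := by
          rw [← ENNReal.ofReal_mul hr.le]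
          congr 1
          rw [show (1:ℝ) - θ = 1 + -θ by ring, Real.rpow_add hr, Real.rpow_one]
          ring
      _ < ENNReal.ofReal ε := by
          rw [ENNReal.ofReal_lt_ofReal_iff hε]
          have hr2 : r < (ε/(2*K))^((2:ℝ)/(1-α)) := hrlt.trans_le (min_le_right _ _)
          have hlt : r ^ ((1:ℝ)-θ) < ((ε/(2*K))^((2:ℝ)/(1-α)))^((1:ℝ)-θ) :=
            Real.rpow_lt_rpow hr.le hr2 (by rw [h1θ]; linarith)
          have heq : ((ε/(2*K))^((2:ℝ)/(1-α)))^((1:ℝ)-θ) = ε/(2*K) := by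
            rw [← Real.rpow_mul (by positivity), h1θ,
              show ((2:ℝ)/(1-α)) * ((1-α)/2) = 1 by field_simp, Real.rpow_one]
          calc K * r ^ ((1:ℝ)-θ) < K * (ε/(2*K)) := by
                exact mul_lt_mul_of_pos_left (hlt.trans_le heq.le) hK0
            _ = ε/2 := by field_simp
            _ < ε := by linarith
end

section
/- Let ν be a nonnegative Radon measure on ℝ^N \ {0} satisfying: ν(ℝ^N \ B_δ) < ∞ for all δ > 0, and ν{ z ∈ B : r|z·e| ≤ |z-(z·e)e|² } < ∞ for all r > 0 and all unit vectors e. Let u : ℝ^N → ℝ be globally Lipschitz and C^{1,1} at a point x, i.e. there is C > 0 with |u(x+z) - u(x) - Du(x)·z| ≤ C|z|² for all z, and suppose Du(x) ≠ 0. Then the quantity κ₊*[x,u] = ν{ z : u(x+z) ≥ u(x), Du(x)·z ≤ 0 } is finite. -/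
open MeasureTheory Metric Filter Set
open scoped ENNReal Topology RealInnerProductSpace

/-- If the nonnegative Radon measure `ν` is finite away from the origin and finite on
parabolic regions, `u` is globally Lipschitz and `C^{1,1}` at `x` with nonzero gradient
`p = Du(x)`, then `κ₊*[x,u] = ν{ z : u(x+z) ≥ u(x), Du(x)·z ≤ 0 }` is finite. -/
theorem kappa_plus_finite (N : ℕ) (hN : 1 ≤ N)
    (ν : Measure (EuclideanSpace ℝ (Fin N)))
    (hν1 : ∀ δ : ℝ, 0 < δ → ν (Metric.ball (0 : EuclideanSpace ℝ (Fin N)) δ)ᶜ < ⊤)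
    (hν2 : ∀ r : ℝ, 0 < r → ∀ e : EuclideanSpace ℝ (Fin N), ‖e‖ = 1 →
      ν {z ∈ Metric.ball (0 : EuclideanSpace ℝ (Fin N)) 1 |
          r * |⟪z, e⟫| ≤ ‖z - ⟪z, e⟫ • e‖ ^ 2} < ⊤)
    (u : EuclideanSpace ℝ (Fin N) → ℝ) (L : NNReal) (hLip : LipschitzWith L u)
    (x p : EuclideanSpace ℝ (Fin N)) (hgrad : HasGradientAt u p x) (hp : p ≠ 0)
    (C : ℝ) (hC : 0 < C)
    (hC11 : ∀ z, |u (x + z) - u x - ⟪p, z⟫| ≤ C * ‖z‖ ^ 2) :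
    ν {z | u x ≤ u (x + z) ∧ ⟪p, z⟫ ≤ 0} < ⊤ := by
  have hp' : (0 : ℝ) < ‖p‖ := norm_pos_iff.mpr hp
  set e : EuclideanSpace ℝ (Fin N) := ‖p‖⁻¹ • p with he_def
  have he : ‖e‖ = 1 := norm_smul_inv_norm hp
  set r : ℝ := ‖p‖ / (2 * C) with hr_def
  have hr : 0 < r := div_pos hp' (by positivity)
  set δ : ℝ := min 1 r with hδ_def
  have hδ : 0 < δ := lt_min one_pos hr
  have hpe : p = ‖p‖ • e := by
    rw [he_def, smul_smul, mul_inv_cancel₀ (ne_of_gt hp'), one_smul]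
  have hsub : {z | u x ≤ u (x + z) ∧ ⟪p, z⟫ ≤ 0} ⊆
      (Metric.ball (0 : EuclideanSpace ℝ (Fin N)) δ)ᶜ ∪
      {z ∈ Metric.ball (0 : EuclideanSpace ℝ (Fin N)) 1 |
          r * |⟪z, e⟫| ≤ ‖z - ⟪z, e⟫ • e‖ ^ 2} := by
    intro z hz
    by_cases hzδ : z ∈ Metric.ball (0 : EuclideanSpace ℝ (Fin N)) δ
    · right
      have hznorm : ‖z‖ < δ := by simpa [Metric.mem_ball] using hzδ
      constructor
      · exact Metric.mem_ball.mpr (by simpa using lt_of_lt_of_le hznorm (min_le_left _ _))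
      set t : ℝ := ⟪z, e⟫ with ht_def
      have hpz : ⟪p, z⟫ = ‖p‖ * t := by
        rw [ht_def, he_def, real_inner_smul_right, real_inner_comm z p]
        field_simp
      -- bound |⟪p,z⟫| ≤ C‖z‖²
      have h1 : -⟪p, z⟫ ≤ C * ‖z‖ ^ 2 := by
        have := hC11 z
        have h2 := abs_le.mp this
        linarith [hz.1]
      -- Pythagoras
      have hee : ⟪e, e⟫ = 1 := by
        rw [real_inner_self_eq_norm_sq, he]; norm_num
      have hez : ⟪e, z⟫ = t := (real_inner_comm z e).trans ht_def.symm
      have horth : ⟪t • e, z - t • e⟫ = 0 := by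
        rw [real_inner_smul_left, inner_sub_right, real_inner_smul_right, hee, hez]
        ring
      have hpyth : ‖z‖ ^ 2 = t ^ 2 + ‖z - t • e‖ ^ 2 := by
        have : ‖t • e + (z - t • e)‖ ^ 2 =
            ‖t • e‖ ^ 2 + 2 * ⟪t • e, z - t • e⟫ + ‖z - t • e‖ ^ 2 :=
          norm_add_sq_real _ _
        have hte : ‖t • e‖ = |t| := by rw [norm_smul, he, Real.norm_eq_abs, mul_one]
        rw [horth, hte] at this
        have hz' : t • e + (z - t • e) = z := by abel
        rw [hz'] at this
        rw [this, sq_abs]; ring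
      have htabs : |t| ≤ ‖z‖ := by
        calc |t| ≤ ‖z‖ * ‖e‖ := abs_real_inner_le_norm z e
        _ = ‖z‖ := by rw [he, mul_one]
      have htδ : |t| ≤ r := le_trans htabs (le_of_lt (lt_of_lt_of_le hznorm (min_le_right _ _)))
      have hkey : ‖p‖ * |t| ≤ C * (t ^ 2 + ‖z - t • e‖ ^ 2) := by
        have : |⟪p, z⟫| = ‖p‖ * |t| := by
          rw [hpz, abs_mul, abs_of_pos hp']
        calc ‖p‖ * |t| = |⟪p, z⟫| := this.symm
        _ = -⟪p, z⟫ := abs_of_nonpos hz.2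
        _ ≤ C * ‖z‖ ^ 2 := h1
        _ = C * (t ^ 2 + ‖z - t • e‖ ^ 2) := by rw [hpyth]
      -- conclude r * |t| ≤ ‖z - t e‖²
      have habs : 0 ≤ |t| := abs_nonneg t
      have ht2 : t ^ 2 = |t| * |t| := by rw [← sq_abs]; ring
      have hrC : r * (2 * C) = ‖p‖ := div_mul_cancel₀ _ (by positivity)
      have h3 : t ^ 2 ≤ r * |t| := by
        rw [ht2]; exact mul_le_mul_of_nonneg_right htδ habs
      nlinarith [hkey, h3, hrC, hC, sq_nonneg ‖z - t • e‖]
    · left; exact hzδ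
  calc ν {z | u x ≤ u (x + z) ∧ ⟪p, z⟫ ≤ 0}
      ≤ ν ((Metric.ball (0 : EuclideanSpace ℝ (Fin N)) δ)ᶜ ∪
        {z ∈ Metric.ball (0 : EuclideanSpace ℝ (Fin N)) 1 |
          r * |⟪z, e⟫| ≤ ‖z - ⟪z, e⟫ • e‖ ^ 2}) := measure_mono hsub
    _ ≤ ν (Metric.ball (0 : EuclideanSpace ℝ (Fin N)) δ)ᶜ +
        ν {z ∈ Metric.ball (0 : EuclideanSpace ℝ (Fin N)) 1 |
          r * |⟪z, e⟫| ≤ ‖z - ⟪z, e⟫ • e‖ ^ 2} := measure_union_le _ _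
    _ < ⊤ := ENNReal.add_lt_top.mpr ⟨hν1 δ hδ, hν2 r hr e he⟩
end

section
/- Let ν be a nonnegative Radon measure on ℝ^N \ {0} with ν(ℝ^N \ B_δ) < ∞ for all δ > 0 and ν{ z ∈ B : r|z·e| ≤ |z-(z·e)e|² } < ∞ for all r > 0 and unit vectors e. Let u be C^{1,1} at x with Du(x) ≠ 0 and |u(x+z) - u(x) - Du(x)·z| ≤ C|z|². Then the quantity κ₋*[x,u] = ν{ z : u(x+z) ≤ u(x), Du(x)·z ≥ 0 } is finite. -/
open MeasureTheory Metric Filter Set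
open scoped ENNReal Topology RealInnerProductSpace

/-- If the nonnegative Radon measure `ν` is finite away from the origin and finite on
parabolic regions, and `u` is `C^{1,1}` at `x` with nonzero gradient `p = Du(x)`, then
`κ₋*[x,u] = ν{ z : u(x+z) ≤ u(x), Du(x)·z ≥ 0 }` is finite. -/
theorem kappa_minus_finite (N : ℕ) (hN : 1 ≤ N)
    (ν : Measure (EuclideanSpace ℝ (Fin N)))
    (hν1 : ∀ δ : ℝ, 0 < δ → ν (Metric.ball (0 : EuclideanSpace ℝ (Fin N)) δ)ᶜ < ⊤)
    (hν2 : ∀ r : ℝ, 0 < r → ∀ e : EuclideanSpace ℝ (Fin N), ‖e‖ = 1 →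
      ν {z ∈ Metric.ball (0 : EuclideanSpace ℝ (Fin N)) 1 |
          r * |⟪z, e⟫| ≤ ‖z - ⟪z, e⟫ • e‖ ^ 2} < ⊤)
    (u : EuclideanSpace ℝ (Fin N) → ℝ)
    (x p : EuclideanSpace ℝ (Fin N)) (hgrad : HasGradientAt u p x) (hp : p ≠ 0)
    (C : ℝ) (hC : 0 < C)
    (hC11 : ∀ z, |u (x + z) - u x - ⟪p, z⟫| ≤ C * ‖z‖ ^ 2) :
    ν {z | u (x + z) ≤ u x ∧ 0 ≤ ⟪p, z⟫} < ⊤ := by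
  have hpn : (0 : ℝ) < ‖p‖ := norm_pos_iff.mpr hp
  set e : EuclideanSpace ℝ (Fin N) := ‖p‖⁻¹ • p with he_def
  have he : ‖e‖ = 1 := by
    rw [he_def, norm_smul, norm_inv, norm_norm, inv_mul_cancel₀ hpn.ne']
  set r : ℝ := ‖p‖ / (2 * C) with hr_def
  have hr : 0 < r := div_pos hpn (by linarith)
  set δ : ℝ := min 1 r with hδ_def
  have hδ : 0 < δ := lt_min one_pos hr
  have hsub : {z | u (x + z) ≤ u x ∧ 0 ≤ ⟪p, z⟫} ⊆
      (Metric.ball (0 : EuclideanSpace ℝ (Fin N)) δ)ᶜ ∪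
      {z ∈ Metric.ball (0 : EuclideanSpace ℝ (Fin N)) 1 |
          r * |⟪z, e⟫| ≤ ‖z - ⟪z, e⟫ • e‖ ^ 2} := by
    intro z ⟨h1, h2⟩
    by_cases hz : z ∈ Metric.ball (0 : EuclideanSpace ℝ (Fin N)) δ
    · right
      rw [mem_ball_zero_iff] at hz
      have hz1 : ‖z‖ < 1 := lt_of_lt_of_le hz (min_le_left _ _)
      have hzr : ‖z‖ < r := lt_of_lt_of_le hz (min_le_right _ _)
      refine ⟨mem_ball_zero_iff.mpr hz1, ?_⟩
      set t : ℝ := ⟪z, e⟫ with ht_def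
      have ht : t = ‖p‖⁻¹ * ⟪p, z⟫ := by
        rw [ht_def, he_def, real_inner_smul_right, real_inner_comm]
      have ht0 : 0 ≤ t := by
        rw [ht]; positivity
      have htz : t ≤ ‖z‖ := by
        calc t ≤ |⟪z, e⟫| := le_abs_self _
          _ ≤ ‖z‖ * ‖e‖ := abs_real_inner_le_norm z e
          _ = ‖z‖ := by rw [he, mul_one]
      -- key: ⟪p, z⟫ ≤ C ‖z‖²
      have hkey : ⟪p, z⟫ ≤ C * ‖z‖ ^ 2 := by
        have := abs_le.1 (hC11 z)
        linarith [this.1]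
      have hpt : ‖p‖ * t ≤ C * ‖z‖ ^ 2 := by
        rw [ht, mul_inv_cancel_left₀ hpn.ne']; exact hkey
      -- Pythagoras: ‖z - t • e‖² = ‖z‖² - t²
      have hpyth : ‖z - t • e‖ ^ 2 = ‖z‖ ^ 2 - t ^ 2 := by
        have h1 : ⟪z, t • e⟫ = t ^ 2 := by
          rw [real_inner_smul_right, ← ht_def]; ring
        have h2 : ‖t • e‖ ^ 2 = t ^ 2 := by
          rw [norm_smul, he, mul_one, Real.norm_eq_abs, sq_abs]
        rw [norm_sub_sq_real, h1, h2]; ring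
      have habs : |t| = t := abs_of_nonneg ht0
      rw [habs, hpyth]
      -- ‖p‖ t ≤ C t² + C(‖z‖² - t²),  C t² ≤ C r t = (‖p‖/2) t
      have ht2 : C * t ^ 2 ≤ (‖p‖ / 2) * t := by
        have : t * t ≤ r * t := mul_le_mul_of_nonneg_right (htz.trans hzr.le) ht0
        calc C * t ^ 2 = C * (t * t) := by ring
          _ ≤ C * (r * t) := by nlinarith
          _ = (‖p‖ / 2) * t := by rw [hr_def]; field_simp
      have : (‖p‖ / 2) * t ≤ C * (‖z‖ ^ 2 - t ^ 2) := by nlinarith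
      rw [hr_def]
      rw [div_mul_eq_mul_div, div_le_iff₀ (by linarith : (0:ℝ) < 2 * C)]
      nlinarith
    · left; exact hz
  calc ν {z | u (x + z) ≤ u x ∧ 0 ≤ ⟪p, z⟫} ≤ _ := measure_mono hsub
    _ ≤ _ := measure_union_le _ _
    _ < ⊤ := ENNReal.add_lt_top.2 ⟨hν1 δ hδ, hν2 r hr e he⟩
end

section
/- Let ν be a nonnegative Radon measure on ℝ^N \ {0} satisfying ν(ℝ^N \ B_δ) ≤ C_ν/δ for δ ∈ (0,1] and sup_{e∈S, r∈(0,1]} r·ν{ z ∈ B : r|z·e| ≤ |z-(z·e)e|² } ≤ C_ν. Let u₀ ∈ C²_b(ℝ^N) (bounded with bounded first and second derivatives). Then there is a constant C₀ depending only on C_ν, ‖Du₀‖_∞ and ‖D²u₀‖_∞ such that for every x with Du₀(x) ≠ 0: ( ν{z : u₀(x+z) ≥ u₀(x), Du₀(x)·z ≤ 0} + ν{z : u₀(x+z) ≤ u₀(x), Du₀(x)·z ≥ 0} ) · |Du₀(x)| ≤ C₀. -/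
open MeasureTheory Metric Filter Set
open scoped ENNReal Topology RealInnerProductSpace

set_option maxHeartbeats 1000000 in
/-- A priori bound: under the quantitative assumptions on the singular measure `ν`,
for `u₀ ∈ C²_b(ℝ^N)` there is `C₀` such that at every point with `Du₀(x) ≠ 0`,
`(κ₊*[x,u₀] + κ₋*[x,u₀]) · |Du₀(x)| ≤ C₀`. -/
theorem kappa_bound_for_C2_data (N : ℕ) (hN : 1 ≤ N)
    (ν : Measure (EuclideanSpace ℝ (Fin N))) (Cν : ℝ) (hCν : 0 < Cν)
    (hν1 : ∀ δ ∈ Set.Ioc (0:ℝ) 1,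
      ν (Metric.ball (0 : EuclideanSpace ℝ (Fin N)) δ)ᶜ ≤ ENNReal.ofReal (Cν / δ))
    (hν2 : ∀ e : EuclideanSpace ℝ (Fin N), ‖e‖ = 1 → ∀ r ∈ Set.Ioc (0:ℝ) 1,
      ENNReal.ofReal r * ν {z ∈ Metric.ball (0 : EuclideanSpace ℝ (Fin N)) 1 |
          r * |⟪z, e⟫| ≤ ‖z - ⟪z, e⟫ • e‖ ^ 2} ≤ ENNReal.ofReal Cν)
    (u₀ : EuclideanSpace ℝ (Fin N) → ℝ) (hu₀ : ContDiff ℝ 2 u₀)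
    (M₁ M₂ : ℝ) (hb : ∀ x, |u₀ x| ≤ M₁) (hDu : ∀ x, ‖gradient u₀ x‖ ≤ M₁)
    (hD2u : ∀ x z, |u₀ (x + z) - u₀ x - ⟪gradient u₀ x, z⟫| ≤ M₂ * ‖z‖ ^ 2) :
    ∃ C₀ : ℝ, 0 < C₀ ∧ ∀ x : EuclideanSpace ℝ (Fin N), gradient u₀ x ≠ 0 →
      (ν {z | u₀ x ≤ u₀ (x + z) ∧ ⟪gradient u₀ x, z⟫ ≤ 0}
          + ν {z | u₀ (x + z) ≤ u₀ x ∧ 0 ≤ ⟪gradient u₀ x, z⟫})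
        * ENNReal.ofReal ‖gradient u₀ x‖ ≤ ENNReal.ofReal C₀ := by
  set M : ℝ := max M₂ 1 with hMdef
  have hM1 : (1:ℝ) ≤ M := le_max_right _ _
  have hM0 : (0:ℝ) < M := lt_of_lt_of_le one_pos hM1
  have hM₂M : M₂ ≤ M := le_max_left _ _
  have hM₁0 : 0 ≤ M₁ := le_trans (abs_nonneg _) (hb 0)
  refine ⟨4 * Cν * (M₁ + 2 * M), by positivity, ?_⟩
  intro x hx
  set p : EuclideanSpace ℝ (Fin N) := gradient u₀ x with hpdef
  have hg : 0 < ‖p‖ := norm_pos_iff.mpr hx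
  set g : ℝ := ‖p‖ with hgdef
  have hgM₁ : g ≤ M₁ := hDu x
  set e : EuclideanSpace ℝ (Fin N) := ‖p‖⁻¹ • p with hedef
  have hne : ‖e‖ = 1 := norm_smul_inv_norm hx
  set r : ℝ := min 1 (g / (2 * M)) with hrdef
  have hr0 : 0 < r := lt_min one_pos (by positivity)
  have hr1 : r ≤ 1 := min_le_left _ _
  have hrg : r ≤ g / (2 * M) := min_le_right _ _
  have hMr : M * r ≤ g / 2 := by
    calc M * r ≤ M * (g / (2 * M)) := mul_le_mul_of_nonneg_left hrg hM0.le
      _ = g / 2 := by field_simp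
  -- inner product relation
  have hip : ∀ z : EuclideanSpace ℝ (Fin N), ⟪p, z⟫ = g * ⟪z, e⟫ := by
    intro z
    rw [hedef, real_inner_smul_right, real_inner_comm, ← hgdef]
    field_simp
  -- the good set from hν2
  set S : Set (EuclideanSpace ℝ (Fin N)) :=
    {z ∈ Metric.ball (0 : EuclideanSpace ℝ (Fin N)) 1 |
        r * |⟪z, e⟫| ≤ ‖z - ⟪z, e⟫ • e‖ ^ 2} with hSdef
  -- key geometric inclusion
  have key : ∀ z : EuclideanSpace ℝ (Fin N), ‖z‖ < r →
      g * |⟪z, e⟫| ≤ M * ‖z‖ ^ 2 → z ∈ S := by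
    intro z hz hineq
    have hz1 : z ∈ Metric.ball (0 : EuclideanSpace ℝ (Fin N)) 1 := by
      rw [mem_ball_zero_iff]; linarith
    refine ⟨hz1, ?_⟩
    set c : ℝ := ⟪z, e⟫ with hcdef
    have hC : |c| ≤ ‖z‖ := by
      calc |c| ≤ ‖z‖ * ‖e‖ := abs_real_inner_le_norm z e
        _ = ‖z‖ := by rw [hne, mul_one]
    have hw : ‖z - c • e‖ ^ 2 = ‖z‖ ^ 2 - c ^ 2 := by
      rw [norm_sub_sq_real, real_inner_smul_right, norm_smul, hne, mul_one,
        Real.norm_eq_abs, sq_abs]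
      ring
    rw [hw]
    set W : ℝ := ‖z‖ ^ 2 - c ^ 2 with hWdef
    have hW0 : 0 ≤ W := by nlinarith [abs_nonneg c, sq_abs c]
    have hc2 : c ^ 2 ≤ r * |c| := by
      nlinarith [abs_nonneg c, sq_abs c, hC, hz]
    have h2 : g / 2 * |c| ≤ M * W := by
      have h3 : M * c ^ 2 ≤ M * (r * |c|) :=
        mul_le_mul_of_nonneg_left hc2 hM0.le
      have h4 : M * r * |c| ≤ g / 2 * |c| :=
        mul_le_mul_of_nonneg_right hMr (abs_nonneg c)
      nlinarith [hineq]
    nlinarith [mul_le_mul_of_nonneg_left h2 hr0.le,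
      mul_nonneg (sub_nonneg.mpr hMr) hW0, hg]
  -- each bad set satisfies the Taylor inequality
  have taylor : ∀ z : EuclideanSpace ℝ (Fin N),
      ((u₀ x ≤ u₀ (x + z) ∧ ⟪p, z⟫ ≤ 0) ∨ (u₀ (x + z) ≤ u₀ x ∧ 0 ≤ ⟪p, z⟫)) →
      g * |⟪z, e⟫| ≤ M * ‖z‖ ^ 2 := by
    intro z hz
    have hT := hD2u x z
    rw [← hpdef] at hT
    have hT' : |u₀ (x + z) - u₀ x - ⟪p, z⟫| ≤ M * ‖z‖ ^ 2 := by
      refine hT.trans (mul_le_mul_of_nonneg_right hM₂M (by positivity))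
    rw [abs_le] at hT'
    have hgc : g * ⟪z, e⟫ = ⟪p, z⟫ := (hip z).symm
    rcases hz with ⟨h1, h2⟩ | ⟨h1, h2⟩
    · have hce : ⟪z, e⟫ ≤ 0 := by nlinarith [hg]
      rw [abs_of_nonpos hce]
      have : g * -⟪z, e⟫ = -⟪p, z⟫ := by rw [← hgc]; ring
      rw [this]; linarith [hT'.2]
    · have hce : 0 ≤ ⟪z, e⟫ := by nlinarith [hg]
      rw [abs_of_nonneg hce, hgc]; linarith [hT'.1]
  -- measure bound for a bad set
  have measBound : ∀ A : Set (EuclideanSpace ℝ (Fin N)),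
      (∀ z ∈ A, g * |⟪z, e⟫| ≤ M * ‖z‖ ^ 2) →
      ν A ≤ ENNReal.ofReal (2 * (Cν / r)) := by
    intro A hA
    have hsub : A ⊆ S ∪ (Metric.ball (0 : EuclideanSpace ℝ (Fin N)) r)ᶜ := by
      intro z hz
      by_cases hzr : ‖z‖ < r
      · exact Or.inl (key z hzr (hA z hz))
      · exact Or.inr (by simpa [mem_ball_zero_iff] using hzr)
    have hS : ν S ≤ ENNReal.ofReal (Cν / r) := by
      have h := hν2 e hne r ⟨hr0, hr1⟩
      rw [← hSdef] at h
      rw [ENNReal.ofReal_div_of_pos hr0]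
      rw [ENNReal.le_div_iff_mul_le (Or.inl (by simp [hr0])) (Or.inl ENNReal.ofReal_ne_top)]
      rwa [mul_comm]
    have hB : ν (Metric.ball (0 : EuclideanSpace ℝ (Fin N)) r)ᶜ
        ≤ ENNReal.ofReal (Cν / r) := hν1 r ⟨hr0, hr1⟩
    calc ν A ≤ ν (S ∪ (Metric.ball (0 : EuclideanSpace ℝ (Fin N)) r)ᶜ) :=
          measure_mono hsub
      _ ≤ ν S + ν (Metric.ball (0 : EuclideanSpace ℝ (Fin N)) r)ᶜ := measure_union_le _ _
      _ ≤ ENNReal.ofReal (Cν / r) + ENNReal.ofReal (Cν / r) := add_le_add hS hB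
      _ = ENNReal.ofReal (2 * (Cν / r)) := by
          rw [← ENNReal.ofReal_add (by positivity) (by positivity)]; ring_nf
  have hAp := measBound {z | u₀ x ≤ u₀ (x + z) ∧ ⟪p, z⟫ ≤ 0}
    (fun z hz => taylor z (Or.inl hz))
  have hAm := measBound {z | u₀ (x + z) ≤ u₀ x ∧ 0 ≤ ⟪p, z⟫}
    (fun z hz => taylor z (Or.inr hz))
  have hgr : g ≤ (M₁ + 2 * M) * r := by
    rcases min_cases 1 (g / (2 * M)) with ⟨h1, h2⟩ | ⟨h1, h2⟩
    · rw [hrdef, h1, mul_one]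
      linarith
    · rw [hrdef, h1]
      have heq : (M₁ + 2 * M) * (g / (2 * M)) = M₁ * g / (2 * M) + g := by
        field_simp
      have hpos : 0 ≤ M₁ * g / (2 * M) := by positivity
      linarith
  calc (ν {z | u₀ x ≤ u₀ (x + z) ∧ ⟪gradient u₀ x, z⟫ ≤ 0}
          + ν {z | u₀ (x + z) ≤ u₀ x ∧ 0 ≤ ⟪gradient u₀ x, z⟫})
        * ENNReal.ofReal ‖gradient u₀ x‖
      ≤ (ENNReal.ofReal (2 * (Cν / r)) + ENNReal.ofReal (2 * (Cν / r)))
          * ENNReal.ofReal g := by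
        exact mul_le_mul_left (add_le_add hAp hAm) _
    _ = ENNReal.ofReal (4 * (Cν / r) * g) := by
        rw [← ENNReal.ofReal_add (by positivity) (by positivity),
          ← ENNReal.ofReal_mul (by positivity)]
        ring_nf
    _ ≤ ENNReal.ofReal (4 * Cν * (M₁ + 2 * M)) := by
        apply ENNReal.ofReal_le_ofReal
        have heq : 4 * (Cν / r) * g = 4 * Cν * g / r := by ring
        rw [heq, div_le_iff₀ hr0]
        nlinarith [mul_le_mul_of_nonneg_left hgr (by positivity : (0:ℝ) ≤ 4 * Cν)]
end

section
/- Let N ≥ 2, α = 1, and let ν be the measure on ℝ^N with density |z|^{-N-1}. Then for every r > 0 and every unit vector e, the set { z ∈ B : r|z·e| ≤ |z - (z·e)e|² } has infinite ν-measure. In particular assumption (A3) fails for the kernel |z|^{-N-1}. -/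
open MeasureTheory Metric Filter Set
open scoped ENNReal Topology RealInnerProductSpace

lemma alpha_one_key (N : ℕ) (hN : 2 ≤ N) (r : ℝ) (hr : 0 < r) :
    (volume.withDensity fun x : EuclideanSpace ℝ (Fin N) =>
        ENNReal.ofReal (‖x‖ ^ (-(N:ℝ) - 1)))
      {x : EuclideanSpace ℝ (Fin N) | ‖x‖ < 1 ∧
        r * |x ⟨0, by omega⟩| ≤ ‖x‖ ^ 2 - x ⟨0, by omega⟩ ^ 2} = ⊤ := by
  have hN0 : (0:ℝ) ≤ N := Nat.cast_nonneg N
  set p : ℝ := -(N:ℝ) - 1 with hp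
  have hp0 : p ≤ 0 := by rw [hp]; linarith
  set i0 : Fin N := ⟨0, by omega⟩ with hi0
  set i1 : Fin N := ⟨1, by omega⟩ with hi1
  have hne : i0 ≠ i1 := by simp [hi0, hi1, Fin.ext_iff]
  set S : Set (EuclideanSpace ℝ (Fin N)) :=
    {x | ‖x‖ < 1 ∧ r * |x i0| ≤ ‖x‖ ^ 2 - x i0 ^ 2} with hS
  set ν : Measure (EuclideanSpace ℝ (Fin N)) :=
    volume.withDensity fun x => ENNReal.ofReal (‖x‖ ^ p) with hνdef
  show ν S = ⊤
  -- choose K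
  have hsq : (0:ℝ) < Real.sqrt N := Real.sqrt_pos.2 (by positivity)
  obtain ⟨K, hK⟩ : ∃ K : ℕ, ((1:ℝ)/2) ^ K < min r (1 / (2 * Real.sqrt N)) :=
    exists_pow_lt_of_lt_one (lt_min hr (by positivity)) (by norm_num)
  have hKr : ((1:ℝ)/2) ^ K ≤ r := (hK.trans_le (min_le_left _ _)).le
  have hKn : 2 * Real.sqrt N * ((1:ℝ)/2) ^ K < 1 := by
    have := hK.trans_le (min_le_right _ _)
    rw [lt_div_iff₀ (by positivity)] at this
    linarith [this]
  -- the boxes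
  set a : ℕ → ℝ := fun k => ((1:ℝ)/2) ^ (K + k) with ha
  have hapos : ∀ k, 0 < a k := fun k => by positivity
  have haK : ∀ k, a k ≤ ((1:ℝ)/2) ^ K := fun k =>
    pow_le_pow_of_le_one (by norm_num) (by norm_num) (Nat.le_add_right _ _)
  have har : ∀ k, a k ≤ r := fun k => (haK k).trans hKr
  set I : ℕ → Fin N → Set ℝ := fun k i =>
    if i = i0 then Set.Ico 0 (a k ^ 2 / r)
    else if i = i1 then Set.Ico (a k) (2 * a k)
    else Set.Ico 0 (a k) with hI
  set B : ℕ → Set (EuclideanSpace ℝ (Fin N)) := fun k =>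
    ((MeasurableEquiv.toLp 2 (Fin N → ℝ)).symm) ⁻¹' (Set.univ.pi (I k)) with hB
  have hImeas : ∀ k i, MeasurableSet (I k i) := by
    intro k i
    simp only [hI]
    split_ifs <;> exact measurableSet_Ico
  have hBmeas : ∀ k, MeasurableSet (B k) := fun k =>
    (MeasurableSet.univ_pi (hImeas k)).preimage (MeasurableEquiv.toLp 2 (Fin N → ℝ)).symm.measurable
  have hmemB : ∀ k (x : EuclideanSpace ℝ (Fin N)), x ∈ B k ↔ ∀ i, x i ∈ I k i := by
    intro k x
    rw [hB]
    simp [Set.mem_pi]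
  -- coordinate bounds in a box
  have hcoord : ∀ k x, x ∈ B k → ∀ i : Fin N, 0 ≤ x i ∧ x i ≤ 2 * a k := by
    intro k x hx i
    have h := (hmemB k x).1 hx i
    simp only [hI] at h
    have hark : a k ^ 2 / r ≤ a k := by
      rw [div_le_iff₀ hr, sq]
      exact mul_le_mul_of_nonneg_left (har k) (hapos k).le
    split_ifs at h with h1 h2
    · exact ⟨h.1, h.2.le.trans (hark.trans (by linarith [hapos k]))⟩
    · exact ⟨(hapos k).le.trans h.1, h.2.le⟩
    · exact ⟨h.1, h.2.le.trans (by linarith [hapos k])⟩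
  have hnormsq : ∀ x : EuclideanSpace ℝ (Fin N), ‖x‖ ^ 2 = ∑ i, x i ^ 2 := by
    intro x
    rw [EuclideanSpace.norm_eq, Real.sq_sqrt (by positivity)]
    simp [Real.norm_eq_abs, sq_abs]
  -- norm bound in a box
  have hnormB : ∀ k x, x ∈ B k → ‖x‖ ≤ 2 * Real.sqrt N * a k := by
    intro k x hx
    have h1 : ‖x‖ ^ 2 ≤ (2 * Real.sqrt N * a k) ^ 2 := by
      rw [hnormsq]
      calc ∑ i, x i ^ 2 ≤ ∑ _i : Fin N, (2 * a k) ^ 2 := by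
            refine Finset.sum_le_sum fun i _ => ?_
            have := hcoord k x hx i
            nlinarith [this.1, this.2]
        _ = N * (2 * a k) ^ 2 := by simp [Finset.sum_const, Finset.card_univ]
        _ = (2 * Real.sqrt N * a k) ^ 2 := by
            have : Real.sqrt N ^ 2 = (N:ℝ) := Real.sq_sqrt hN0
            nlinarith [this]
    exact le_of_pow_le_pow_left₀ two_ne_zero (by positivity) h1
  -- volume of a box
  have hvol : ∀ k, volume (B k)
      = ENNReal.ofReal (a k ^ 2 / r) * ENNReal.ofReal (a k) ^ (N - 1) := by
    intro k
    simp only [hB]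
    rw [(EuclideanSpace.volume_preserving_symm_measurableEquiv_toLp (Fin N)).measure_preimage
      ((MeasurableSet.univ_pi (hImeas k)).nullMeasurableSet), volume_pi_pi]
    have hlen : ∀ i, volume (I k i)
        = if i = i0 then ENNReal.ofReal (a k ^ 2 / r) else ENNReal.ofReal (a k) := by
      intro i
      simp only [hI]
      split_ifs with h1 h2
      · rw [Real.volume_Ico]; norm_num
      · rw [Real.volume_Ico]; congr 1; ring
      · rw [Real.volume_Ico]; norm_num
    rw [Finset.prod_congr rfl (fun i _ => hlen i),
      ← Finset.mul_prod_erase Finset.univ _ (Finset.mem_univ i0), if_pos rfl,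
      Finset.prod_congr rfl (fun i hi => if_neg (Finset.ne_of_mem_erase hi)),
      Finset.prod_const, Finset.card_erase_of_mem (Finset.mem_univ i0),
      Finset.card_univ, Fintype.card_fin]
  -- the uniform lower bound
  set ε : ℝ≥0∞ := ENNReal.ofReal ((2 * Real.sqrt N) ^ p / r) with hε
  have hεpos : ε ≠ 0 := by
    rw [hε]
    exact (ENNReal.ofReal_pos.2 (div_pos (Real.rpow_pos_of_pos (by linarith) p) hr)).ne'
  have hlow : ∀ k, ε ≤ ν (B k) := by
    intro k
    rw [hνdef, withDensity_apply _ (hBmeas k)]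
    have hbound : ∀ x ∈ B k,
        ENNReal.ofReal ((2 * Real.sqrt N * a k) ^ p) ≤ ENNReal.ofReal (‖x‖ ^ p) := by
      intro x hx
      apply ENNReal.ofReal_le_ofReal
      have hx1 := (hmemB k x).1 hx i1
      simp only [hI, if_neg hne.symm, if_pos rfl, Set.mem_Ico] at hx1
      have hxne : x ≠ 0 := fun h0 => by
        rw [h0] at hx1
        have : (0 : EuclideanSpace ℝ (Fin N)) i1 = 0 := rfl
        rw [this] at hx1
        linarith [hapos k, hx1.1]
      exact Real.rpow_le_rpow_of_nonpos (norm_pos_iff.2 hxne) (hnormB k x hx) hp0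
    have hreal : (2 * Real.sqrt N * a k) ^ p * (a k ^ 2 / r * a k ^ (N - 1))
        = (2 * Real.sqrt N) ^ p / r := by
      have h1 : (2 * Real.sqrt N * a k) ^ p = (2 * Real.sqrt N) ^ p * a k ^ p :=
        Real.mul_rpow (by positivity) (hapos k).le
      have h2 : a k ^ 2 * a k ^ (N - 1) = a k ^ (N + 1) := by
        rw [← pow_add]; congr 1; omega
      have h3 : a k ^ p * a k ^ (N + 1) = 1 := by
        rw [← Real.rpow_natCast (a k) (N + 1), ← Real.rpow_add (hapos k)]
        have hz : p + ((N + 1 : ℕ) : ℝ) = 0 := by rw [hp]; push_cast; ring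
        rw [hz, Real.rpow_zero]
      calc (2 * Real.sqrt N * a k) ^ p * (a k ^ 2 / r * a k ^ (N - 1))
          = (2 * Real.sqrt N) ^ p * (a k ^ p * (a k ^ 2 * a k ^ (N - 1))) / r := by
            rw [h1]; ring
        _ = (2 * Real.sqrt N) ^ p * (a k ^ p * a k ^ (N + 1)) / r := by rw [h2]
        _ = (2 * Real.sqrt N) ^ p / r := by rw [h3]; ring
    have hkey : ENNReal.ofReal ((2 * Real.sqrt N * a k) ^ p) * volume (B k) = ε := by
      rw [hvol k, ← ENNReal.ofReal_pow (hapos k).le,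
        ← ENNReal.ofReal_mul (by positivity),
        ← ENNReal.ofReal_mul (Real.rpow_nonneg (by positivity) p), hreal, hε]
    calc ε = ENNReal.ofReal ((2 * Real.sqrt N * a k) ^ p) * volume (B k) := hkey.symm
      _ = ∫⁻ _x in B k, ENNReal.ofReal ((2 * Real.sqrt N * a k) ^ p) ∂volume :=
          (setLIntegral_const _ _).symm
      _ ≤ ∫⁻ x in B k, ENNReal.ofReal (‖x‖ ^ p) ∂volume :=
          setLIntegral_mono' (hBmeas k) hbound
  -- boxes sit inside S
  have hsub : ∀ k, B k ⊆ S := by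
    intro k x hx
    have h0 := (hmemB k x).1 hx i0
    have h1 := (hmemB k x).1 hx i1
    simp only [hI, if_pos rfl, Set.mem_Ico] at h0
    simp only [hI, if_neg hne.symm, if_pos rfl, Set.mem_Ico] at h1
    have hsum : x i0 ^ 2 + x i1 ^ 2 ≤ ‖x‖ ^ 2 := by
      rw [hnormsq]
      calc x i0 ^ 2 + x i1 ^ 2 = ∑ i ∈ ({i0, i1} : Finset (Fin N)), x i ^ 2 := by
            rw [Finset.sum_pair hne]
        _ ≤ ∑ i, x i ^ 2 :=
            Finset.sum_le_sum_of_subset_of_nonneg (Finset.subset_univ _)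
              (fun i _ _ => sq_nonneg _)
    constructor
    · have hb := hnormB k x hx
      have h2 : 2 * Real.sqrt N * a k ≤ 2 * Real.sqrt N * ((1:ℝ)/2) ^ K :=
        mul_le_mul_of_nonneg_left (haK k) (by positivity)
      linarith
    · have habs : |x i0| = x i0 := abs_of_nonneg h0.1
      rw [habs]
      have h3 : r * x i0 ≤ a k ^ 2 := by
        have h4 := h0.2
        rw [lt_div_iff₀ hr] at h4
        nlinarith
      have h5 : a k ^ 2 ≤ x i1 ^ 2 := by nlinarith [h1.1, hapos k]
      linarith
  -- boxes are pairwise disjoint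
  have hdisj' : ∀ k l, k < l → Disjoint (B k) (B l) := by
    intro k l hlt
    rw [Set.disjoint_left]
    intro x hxk hxl
    have h1k := (hmemB k x).1 hxk i1
    have h1l := (hmemB l x).1 hxl i1
    simp only [hI, if_neg hne.symm, if_pos rfl, Set.mem_Ico] at h1k h1l
    have hstep : 2 * a l ≤ a k := by
      have h6 : a l ≤ a k / 2 := by
        rw [ha]
        calc ((1:ℝ)/2) ^ (K + l) ≤ ((1:ℝ)/2) ^ (K + k + 1) :=
              pow_le_pow_of_le_one (by norm_num) (by norm_num) (by omega)
          _ = ((1:ℝ)/2) ^ (K + k) / 2 := by rw [pow_succ]; ring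
      linarith
    linarith [h1k.1, h1l.2]
  have hdisj : Pairwise (Function.onFun Disjoint B) := by
    intro k l hkl
    rcases lt_or_gt_of_ne hkl with h | h
    · exact hdisj' k l h
    · exact (hdisj' l k h).symm
  -- conclude
  have hfinal : (⊤ : ℝ≥0∞) ≤ ν S := by
    calc (⊤ : ℝ≥0∞) = ∑' _k : ℕ, ε := (ENNReal.tsum_const_eq_top_of_ne_zero hεpos).symm
      _ ≤ ∑' k, ν (B k) := ENNReal.tsum_le_tsum hlow
      _ = ν (⋃ k, B k) := (measure_iUnion hdisj hBmeas).symm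
      _ ≤ ν S := measure_mono (Set.iUnion_subset hsub)
  exact top_unique hfinal

/-- For `α = 1` (kernel `|z|^{-N-1}`, `N ≥ 2`), every parabolic region
`{ z ∈ B : r|z·e| ≤ |z-(z·e)e|² }` has infinite `ν`-measure: assumption (A3) fails. -/
theorem alpha_one_kernel_infinite (N : ℕ) (hN : 2 ≤ N)
    (ν : Measure (EuclideanSpace ℝ (Fin N)))
    (hν : ν = volume.withDensity fun z => ENNReal.ofReal (‖z‖ ^ (-(N:ℝ) - 1)))
    (r : ℝ) (hr : 0 < r) (e : EuclideanSpace ℝ (Fin N)) (he : ‖e‖ = 1) :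
    ν {z ∈ Metric.ball (0 : EuclideanSpace ℝ (Fin N)) 1 |
        r * |⟪z, e⟫| ≤ ‖z - ⟪z, e⟫ • e‖ ^ 2} = ⊤ := by
  set i0 : Fin N := ⟨0, by omega⟩ with hi0
  -- an orthonormal basis whose `i0`-th vector is `e`
  have hcard : Module.finrank ℝ (EuclideanSpace ℝ (Fin N)) = Fintype.card (Fin N) := by
    simp
  have horth : Orthonormal ℝ (({i0} : Set (Fin N)).restrict fun _ : Fin N => e) := by
    constructor
    · intro i; exact he
    · intro i j hij
      exact absurd (Subtype.ext (i.2.trans j.2.symm)) hij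
  obtain ⟨b, hb⟩ := horth.exists_orthonormalBasis_extension_of_card_eq hcard
  have hbe : b i0 = e := hb i0 rfl
  set f := b.repr with hf
  have hrepr : ∀ z, f z i0 = ⟪z, e⟫ := by
    intro z
    rw [hf, b.repr_apply_apply, hbe, real_inner_comm]
  set S' : Set (EuclideanSpace ℝ (Fin N)) :=
    {x | ‖x‖ < 1 ∧ r * |x i0| ≤ ‖x‖ ^ 2 - x i0 ^ 2} with hS'
  have hset : {z ∈ Metric.ball (0 : EuclideanSpace ℝ (Fin N)) 1 |
      r * |⟪z, e⟫| ≤ ‖z - ⟪z, e⟫ • e‖ ^ 2} = f ⁻¹' S' := by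
    ext z
    have hnz : ‖f z‖ = ‖z‖ := b.repr.norm_map z
    have hperp : ‖z - ⟪z, e⟫ • e‖ ^ 2 = ‖z‖ ^ 2 - ⟪z, e⟫ ^ 2 := by
      rw [norm_sub_sq_real, real_inner_smul_right, norm_smul]
      simp only [he, Real.norm_eq_abs, mul_pow, sq_abs, mul_one, one_pow]
      ring
    simp only [Set.mem_setOf_eq, Metric.mem_ball, dist_zero_right, Set.mem_preimage,
      hS', hrepr, hnz, hperp]
  -- measurability of `S'`
  have hcont0 : Continuous fun x : EuclideanSpace ℝ (Fin N) => x i0 :=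
    (EuclideanSpace.proj i0).continuous
  have hS'meas : MeasurableSet S' := by
    have : S' = {x : EuclideanSpace ℝ (Fin N) | ‖x‖ < 1} ∩
        {x : EuclideanSpace ℝ (Fin N) | r * |x i0| ≤ ‖x‖ ^ 2 - x i0 ^ 2} := by
      ext x; simp [hS', Set.mem_setOf_eq, Set.mem_inter_iff]
    rw [this]
    exact ((isOpen_lt continuous_norm continuous_const).measurableSet).inter
      ((isClosed_le (continuous_const.mul hcont0.abs)
        ((continuous_norm.pow 2).sub (hcont0.pow 2))).measurableSet)
  have hemb : MeasurableEmbedding f := f.toHomeomorph.measurableEmbedding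
  have hmp : MeasurePreserving f volume volume := b.measurePreserving_repr
  rw [hν, hset, withDensity_apply _ (hS'meas.preimage hemb.measurable)]
  have hchg := hmp.setLIntegral_comp_preimage_emb hemb
    (fun x => ENNReal.ofReal (‖x‖ ^ (-(N:ℝ) - 1))) S'
  have hfun : ∀ z : EuclideanSpace ℝ (Fin N),
      ENNReal.ofReal (‖z‖ ^ (-(N:ℝ) - 1)) = ENNReal.ofReal (‖f z‖ ^ (-(N:ℝ) - 1)) := by
    intro z; rw [f.norm_map]
  calc ∫⁻ z in f ⁻¹' S', ENNReal.ofReal (‖z‖ ^ (-(N:ℝ) - 1)) ∂volume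
      = ∫⁻ z in f ⁻¹' S', ENNReal.ofReal (‖f z‖ ^ (-(N:ℝ) - 1)) ∂volume := by
        exact lintegral_congr fun z => hfun z
    _ = ∫⁻ x in S', ENNReal.ofReal (‖x‖ ^ (-(N:ℝ) - 1)) ∂volume := hchg
    _ = ⊤ := by
        rw [← withDensity_apply _ hS'meas]
        exact alpha_one_key N hN r hr
end

section
/- Let α ∈ (0,1), N ≥ 2, B' a real number, δ > 0, and write z = (z₁, z') ∈ ℝ × ℝ^{N-1}. Then (1-α) ∫_{{(z₁,z') : |z'| ≤ δ, 0 ≤ z₁ ≤ B'|z'|²}} |z|^{-N-α} dz converges, as α → 1⁻, to C · max(B',0) · σ(S^{N-2}) for an explicit positive constant C (after the change of variables z₁ = r²τ with r = |z'|), i.e. the rescaled singular measure of the region between the hyperplane {z₁ = 0} and the paraboloid {z₁ = B'|z'|²} converges to a constant multiple of B'⁺. -/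
open MeasureTheory Metric Filter Set
open scoped ENNReal Topology

lemma lintegral_fun_norm_addHaar' {E : Type*} [NormedAddCommGroup E] [NormedSpace ℝ E]
    [MeasurableSpace E] [BorelSpace E] [Nontrivial E] [FiniteDimensional ℝ E]
    (μ : Measure E) [μ.IsAddHaarMeasure] (g : ℝ → ℝ≥0∞) (hg : Measurable g) :
    ∫⁻ x, g ‖x‖ ∂μ = μ.toSphere univ *
      ∫⁻ y in Ioi (0:ℝ), ENNReal.ofReal (y ^ (Module.finrank ℝ E - 1)) * g y := by
  have hm : Measurable fun p : sphere (0:E) 1 × Ioi (0:ℝ) => g p.2 :=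
    hg.comp (measurable_subtype_coe.comp measurable_snd)
  calc ∫⁻ x, g ‖x‖ ∂μ
      = ∫⁻ x : ({(0:E)}ᶜ : Set E), g ‖(x:E)‖ ∂(μ.comap (↑)) := by
        rw [lintegral_subtype_comap (measurableSet_singleton (0:E)).compl (fun x => g ‖x‖),
          restrict_compl_singleton]
    _ = ∫⁻ p : sphere (0:E) 1 × Ioi (0:ℝ), g p.2
          ∂(μ.toSphere.prod (.volumeIoiPow (Module.finrank ℝ E - 1))) := by
        rw [← μ.measurePreserving_homeomorphUnitSphereProd.lintegral_comp
          (f := fun p : sphere (0:E) 1 × Ioi (0:ℝ) => g p.2) hm]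
        simp
    _ = μ.toSphere univ * ∫⁻ y : Ioi (0:ℝ), g y
          ∂(Measure.volumeIoiPow (Module.finrank ℝ E - 1)) := by
        rw [lintegral_prod (f := fun p : sphere (0:E) 1 × Ioi (0:ℝ) => g p.2) hm.aemeasurable]
        simp [lintegral_const, mul_comm]
    _ = μ.toSphere univ *
        ∫⁻ y in Ioi (0:ℝ), ENNReal.ofReal (y ^ (Module.finrank ℝ E - 1)) * g y := by
        rw [Measure.volumeIoiPow, lintegral_withDensity_eq_lintegral_mul _
          ((measurable_subtype_coe.pow_const _).ennreal_ofReal)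
          (g := fun y : Ioi (0:ℝ) => g ↑y) (hg.comp measurable_subtype_coe)]
        simp only [Pi.mul_apply]
        rw [lintegral_subtype_comap measurableSet_Ioi
            (fun y => ENNReal.ofReal (y ^ (Module.finrank ℝ E - 1)) * g y)]

-- measurability of the region
lemma aux_meas_S (N : ℕ) (b t : ℝ) :
    MeasurableSet {z : ℝ × EuclideanSpace ℝ (Fin (N - 1)) |
      ‖z.2‖ ≤ t ∧ 0 ≤ z.1 ∧ z.1 ≤ b * ‖z.2‖ ^ 2} := by
  apply MeasurableSet.inter
  · exact measurableSet_le (measurable_snd.norm) measurable_const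
  · exact (measurableSet_le measurable_const measurable_fst).inter
      (measurableSet_le measurable_fst ((measurable_snd.norm.pow_const 2).const_mul b))

/-- The exact model integral. -/
lemma aux_M (N : ℕ) (hN : 2 ≤ N) {b t α : ℝ} (hb : 0 < b) (ht : 0 < t)
    (hα : α ∈ Ioo (0:ℝ) 1) :
    ∫⁻ z in {z : ℝ × EuclideanSpace ℝ (Fin (N - 1)) |
        ‖z.2‖ ≤ t ∧ 0 ≤ z.1 ∧ z.1 ≤ b * ‖z.2‖ ^ 2},
      ENNReal.ofReal (‖z.2‖ ^ (-(N:ℝ) - α))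
    = ((volume : Measure (EuclideanSpace ℝ (Fin (N - 1)))).toSphere univ) *
      ENNReal.ofReal (b * t ^ (1 - α) / (1 - α)) := by
  haveI : Nonempty (Fin (N - 1)) := ⟨⟨0, by omega⟩⟩
  set E := EuclideanSpace ℝ (Fin (N - 1)) with hE
  have hrank : Module.finrank ℝ E = N - 1 := finrank_euclideanSpace_fin
  haveI : Nontrivial E := Module.nontrivial_of_finrank_pos (R := ℝ) (by rw [hrank]; omega)
  set S : Set (ℝ × E) := {z : ℝ × E | ‖z.2‖ ≤ t ∧ 0 ≤ z.1 ∧ z.1 ≤ b * ‖z.2‖ ^ 2} with hS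
  have hSm : MeasurableSet S := aux_meas_S N b t
  have hFm : Measurable fun z : ℝ × E => ENNReal.ofReal (‖z.2‖ ^ (-(N:ℝ) - α)) :=
    (measurable_snd.norm.pow_const _).ennreal_ofReal
  -- the radial profile after integrating out z₁
  set G : ℝ → ℝ≥0∞ := fun r =>
    (Iic t).indicator (fun r => ENNReal.ofReal (b * r ^ 2) * ENNReal.ofReal (r ^ (-(N:ℝ) - α))) r
    with hG
  have hGm : Measurable G := by
    apply Measurable.indicator _ measurableSet_Iic
    exact ((measurable_id.pow_const 2).const_mul b).ennreal_ofReal.mul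
      ((measurable_id.pow_const _).ennreal_ofReal)
  have step1 : ∫⁻ z in S, ENNReal.ofReal (‖z.2‖ ^ (-(N:ℝ) - α))
      = ∫⁻ y : E, G ‖y‖ := by
    rw [← lintegral_indicator hSm, Measure.volume_eq_prod,
      lintegral_prod_symm _ ((hFm.indicator hSm).aemeasurable)]
    refine lintegral_congr fun y => ?_
    by_cases hy : ‖y‖ ≤ t
    · have : ∀ x : ℝ, S.indicator (fun z : ℝ × E => ENNReal.ofReal (‖z.2‖ ^ (-(N:ℝ) - α))) (x, y)
          = (Icc 0 (b * ‖y‖ ^ 2)).indicator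
              (fun _ => ENNReal.ofReal (‖y‖ ^ (-(N:ℝ) - α))) x := by
        intro x
        by_cases hx : x ∈ Icc 0 (b * ‖y‖ ^ 2)
        · rw [indicator_of_mem hx, indicator_of_mem (show (x, y) ∈ S from ⟨hy, hx.1, hx.2⟩)]
        · rw [indicator_of_notMem hx, indicator_of_notMem]
          intro hmem
          exact hx ⟨hmem.2.1, hmem.2.2⟩
      rw [lintegral_congr this, lintegral_indicator_const measurableSet_Icc,
        Real.volume_Icc]
      rw [hG]
      simp only [Set.indicator_of_mem (show ‖y‖ ∈ Iic t from hy)]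
      rw [sub_zero, mul_comm]
    · have : ∀ x : ℝ, S.indicator (fun z : ℝ × E => ENNReal.ofReal (‖z.2‖ ^ (-(N:ℝ) - α))) (x, y)
          = 0 := by
        intro x
        rw [indicator_of_notMem]
        intro hmem
        exact hy hmem.1
      rw [lintegral_congr this, lintegral_zero]
      rw [hG]
      simp only [Set.indicator_of_notMem (show ‖y‖ ∉ Iic t from hy)]
  rw [step1, lintegral_fun_norm_addHaar' _ G hGm, hrank]
  congr 1
  -- radial computation
  have hmono : ∀ r ∈ Ioi (0:ℝ), ENNReal.ofReal (r ^ (N - 1 - 1)) * G r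
      = (Ioc (0:ℝ) t).indicator (fun r => ENNReal.ofReal (b * r ^ (-α))) r := by
    intro r hr
    rw [mem_Ioi] at hr
    by_cases h : r ≤ t
    · rw [hG]
      simp only [Set.indicator_of_mem (show r ∈ Iic t from h),
        Set.indicator_of_mem (show r ∈ Ioc (0:ℝ) t from ⟨hr, h⟩)]
      rw [← ENNReal.ofReal_mul (by positivity), ← ENNReal.ofReal_mul (by positivity)]
      congr 1
      have h1 : r ^ (N - 1 - 1) * r ^ 2 = r ^ (N : ℕ) := by
        rw [← pow_add]; congr 1; omega
      have h2 : (r : ℝ) ^ (N : ℕ) * r ^ (-(N:ℝ) - α) = r ^ (-α) := by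
        rw [← Real.rpow_natCast r N, ← Real.rpow_add hr]
        ring_nf
      calc r ^ (N - 1 - 1) * (b * r ^ 2 * r ^ (-(N:ℝ) - α))
          = b * (r ^ (N - 1 - 1) * r ^ 2 * r ^ (-(N:ℝ) - α)) := by ring
        _ = b * r ^ (-α) := by rw [h1, h2]
    · rw [hG]
      simp only [Set.indicator_of_notMem (show r ∉ Iic t from h),
        Set.indicator_of_notMem (show r ∉ Ioc (0:ℝ) t from fun hc => h hc.2), mul_zero]
  rw [setLIntegral_congr_fun measurableSet_Ioi hmono]
  rw [lintegral_indicator measurableSet_Ioc, Measure.restrict_restrict measurableSet_Ioc,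
    inter_eq_self_of_subset_left Ioc_subset_Ioi_self]
  have hint : IntegrableOn (fun r : ℝ => b * r ^ (-α)) (Ioc 0 t) := by
    have h0 : IntervalIntegrable (fun x : ℝ => x ^ (-α)) volume 0 t :=
      intervalIntegral.intervalIntegrable_rpow' (by simpa using hα.2)
    rw [intervalIntegrable_iff_integrableOn_Ioc_of_le ht.le] at h0
    exact h0.const_mul b
  rw [← ofReal_integral_eq_lintegral_ofReal hint]
  · congr 1
    rw [MeasureTheory.integral_const_mul, ← intervalIntegral.integral_of_le ht.le,
      integral_rpow (Or.inl (by simpa using hα.2))]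
    rw [Real.zero_rpow (by intro hc; nlinarith [hα.2] : -α + 1 ≠ 0)]
    rw [show -α + 1 = 1 - α by ring]
    ring
  · filter_upwards [ae_restrict_mem measurableSet_Ioc] with r hr
    have : (0:ℝ) < r := hr.1
    positivity

lemma aux_c_neg {N : ℕ} (hN : 2 ≤ N) {α : ℝ} (hα : α ∈ Ioo (0:ℝ) 1) : -(N:ℝ) - α < 0 := by
  have h2 : (2:ℝ) ≤ N := by exact_mod_cast hN
  have := hα.1
  linarith

lemma aux_fm (N : ℕ) (α : ℝ) :
    Measurable fun z : ℝ × EuclideanSpace ℝ (Fin (N - 1)) =>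
      Real.sqrt (z.1 ^ 2 + ‖z.2‖ ^ 2) ^ (-(N:ℝ) - α) :=
  (((measurable_fst.pow_const 2).add (measurable_snd.norm.pow_const 2)).sqrt).pow_const _

/-- Upper bound. -/
lemma aux_up (N : ℕ) (hN : 2 ≤ N) {b δ α : ℝ} (hb : 0 < b) (hδ : 0 < δ)
    (hα : α ∈ Ioo (0:ℝ) 1) :
    ∫⁻ z in {z : ℝ × EuclideanSpace ℝ (Fin (N - 1)) |
        ‖z.2‖ ≤ δ ∧ 0 ≤ z.1 ∧ z.1 ≤ b * ‖z.2‖ ^ 2},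
      ENNReal.ofReal (Real.sqrt (z.1 ^ 2 + ‖z.2‖ ^ 2) ^ (-(N:ℝ) - α))
    ≤ ((volume : Measure (EuclideanSpace ℝ (Fin (N - 1)))).toSphere univ) *
      ENNReal.ofReal (b * δ ^ (1 - α) / (1 - α)) := by
  rw [← aux_M N hN hb hδ hα]
  refine setLIntegral_mono ((measurable_snd.norm.pow_const _).ennreal_ofReal) fun z hz => ?_
  refine ENNReal.ofReal_le_ofReal ?_
  rcases eq_or_lt_of_le (norm_nonneg z.2) with h0 | h0
  · have hn : ‖z.2‖ = 0 := h0.symm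
    have hb0 : b * ‖z.2‖ ^ 2 = 0 := by rw [hn]; ring
    have hz1 : z.1 = 0 := le_antisymm (hz.2.2.trans_eq hb0) hz.2.1
    rw [hz1, hn]
    simp [Real.zero_rpow (aux_c_neg hN hα).ne]
  · have hle : ‖z.2‖ ≤ Real.sqrt (z.1 ^ 2 + ‖z.2‖ ^ 2) :=
      (Real.le_sqrt (norm_nonneg _) (by positivity)).mpr (by nlinarith [sq_nonneg z.1])
    exact Real.rpow_le_rpow_of_nonpos h0 hle (aux_c_neg hN hα).le

/-- Lower bound. -/
lemma aux_low (N : ℕ) (hN : 2 ≤ N) {b t δ α : ℝ} (hb : 0 < b) (ht : 0 < t) (htδ : t ≤ δ)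
    (hα : α ∈ Ioo (0:ℝ) 1) :
    ENNReal.ofReal ((1 + b ^ 2 * t ^ 2) ^ (-((N:ℝ) + 1) / 2)) *
      (((volume : Measure (EuclideanSpace ℝ (Fin (N - 1)))).toSphere univ) *
        ENNReal.ofReal (b * t ^ (1 - α) / (1 - α)))
    ≤ ∫⁻ z in {z : ℝ × EuclideanSpace ℝ (Fin (N - 1)) |
        ‖z.2‖ ≤ δ ∧ 0 ≤ z.1 ∧ z.1 ≤ b * ‖z.2‖ ^ 2},
      ENNReal.ofReal (Real.sqrt (z.1 ^ 2 + ‖z.2‖ ^ 2) ^ (-(N:ℝ) - α)) := by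
  set K : ℝ := (1 + b ^ 2 * t ^ 2) ^ (-((N:ℝ) + 1) / 2) with hK
  have hKpos : 0 < K := Real.rpow_pos_of_pos (by positivity) _
  rw [← aux_M N hN hb ht hα, ← lintegral_const_mul _ ((measurable_snd.norm.pow_const _).ennreal_ofReal)]
  have hsub : {z : ℝ × EuclideanSpace ℝ (Fin (N - 1)) |
        ‖z.2‖ ≤ t ∧ 0 ≤ z.1 ∧ z.1 ≤ b * ‖z.2‖ ^ 2}
      ⊆ {z : ℝ × EuclideanSpace ℝ (Fin (N - 1)) |
        ‖z.2‖ ≤ δ ∧ 0 ≤ z.1 ∧ z.1 ≤ b * ‖z.2‖ ^ 2} :=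
    fun z hz => ⟨hz.1.trans htδ, hz.2.1, hz.2.2⟩
  refine le_trans ?_ (lintegral_mono_set hsub)
  refine setLIntegral_mono ((aux_fm N α).ennreal_ofReal) fun z hz => ?_
  rw [← ENNReal.ofReal_mul hKpos.le]
  refine ENNReal.ofReal_le_ofReal ?_
  rcases eq_or_lt_of_le (norm_nonneg z.2) with h0 | h0
  · rw [← h0, Real.zero_rpow (aux_c_neg hN hα).ne, mul_zero]
    exact Real.rpow_nonneg (Real.sqrt_nonneg _) _
  · set r : ℝ := ‖z.2‖ with hr
    set s : ℝ := Real.sqrt (z.1 ^ 2 + r ^ 2) with hs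
    have hrt : r ≤ t := hz.1
    have hz1 : 0 ≤ z.1 := hz.2.1
    have hz2 : z.1 ≤ b * r ^ 2 := hz.2.2
    have hspos : 0 < s := Real.sqrt_pos.mpr (by positivity)
    have hsle : s ≤ Real.sqrt (1 + b ^ 2 * t ^ 2) * r := by
      have h4 : z.1 ^ 2 ≤ b ^ 2 * r ^ 4 := by nlinarith
      have h5 : r ^ 2 ≤ t ^ 2 := by nlinarith
      have h1 : z.1 ^ 2 + r ^ 2 ≤ (1 + b ^ 2 * t ^ 2) * r ^ 2 := by
        nlinarith [mul_le_mul_of_nonneg_right h5 (mul_nonneg (sq_nonneg b) (sq_nonneg r))]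
      calc s ≤ Real.sqrt ((1 + b ^ 2 * t ^ 2) * r ^ 2) := Real.sqrt_le_sqrt h1
        _ = Real.sqrt (1 + b ^ 2 * t ^ 2) * r := by
            rw [Real.sqrt_mul (by positivity), Real.sqrt_sq h0.le]
    have hstep : (Real.sqrt (1 + b ^ 2 * t ^ 2) * r) ^ (-(N:ℝ) - α) ≤ s ^ (-(N:ℝ) - α) :=
      Real.rpow_le_rpow_of_nonpos hspos hsle (aux_c_neg hN hα).le
    refine le_trans ?_ hstep
    rw [Real.mul_rpow (Real.sqrt_nonneg _) h0.le]
    refine mul_le_mul_of_nonneg_right ?_ (Real.rpow_nonneg h0.le _)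
    rw [Real.sqrt_eq_rpow, ← Real.rpow_mul (by positivity)]
    refine Real.rpow_le_rpow_of_exponent_le (by nlinarith) (by linarith [hα.2.le])

set_option maxHeartbeats 1000000 in
/-- Model computation for Proposition 2.5: with `z = (z₁, z') ∈ ℝ × ℝ^{N-1}`, the rescaled
singular measure of the region between `{z₁ = 0}` and the paraboloid `{z₁ = B'|z'|²}`
(within `|z'| ≤ δ`) converges, as `α → 1⁻`, to `C · max(B',0) · σ(S^{N-2})` for a
positive constant `C` independent of `B'`. -/
theorem model_paraboloid_limit (N : ℕ) (hN : 2 ≤ N) (δ : ℝ) (hδ : 0 < δ) :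
    ∃ C : ℝ, 0 < C ∧ ∀ B' : ℝ,
      Tendsto (fun α : ℝ =>
          (1 - α) * ∫ z in {z : ℝ × EuclideanSpace ℝ (Fin (N - 1)) |
              ‖z.2‖ ≤ δ ∧ 0 ≤ z.1 ∧ z.1 ≤ B' * ‖z.2‖ ^ 2},
            Real.sqrt (z.1 ^ 2 + ‖z.2‖ ^ 2) ^ (-(N:ℝ) - α))
        (nhdsWithin 1 (Set.Iio 1))
        (nhds (C * max B' 0 *
          (((volume : Measure (EuclideanSpace ℝ (Fin (N - 1)))).toSphere
            Set.univ).toReal))) := by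
  refine ⟨1, one_pos, fun B' => ?_⟩
  set sigI : ℝ≥0∞ :=
    (volume : Measure (EuclideanSpace ℝ (Fin (N - 1)))).toSphere Set.univ with hsigI
  have hσfin : sigI ≠ ⊤ := measure_ne_top _ _
  set σ : ℝ := sigI.toReal with hσdef
  have hσ0 : 0 ≤ σ := ENNReal.toReal_nonneg
  set S : Set (ℝ × EuclideanSpace ℝ (Fin (N - 1))) :=
    {z : ℝ × EuclideanSpace ℝ (Fin (N - 1)) |
      ‖z.2‖ ≤ δ ∧ 0 ≤ z.1 ∧ z.1 ≤ B' * ‖z.2‖ ^ 2} with hSdef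
  rcases le_or_gt B' 0 with hB | hB
  · -- degenerate case : the region is null
    have hSsub : S ⊆ ({(0:ℝ)} : Set ℝ) ×ˢ (univ : Set (EuclideanSpace ℝ (Fin (N - 1)))) := by
      intro z hz
      refine ⟨?_, trivial⟩
      have h1 : B' * ‖z.2‖ ^ 2 ≤ 0 := mul_nonpos_iff.mpr (Or.inr ⟨hB, sq_nonneg _⟩)
      have : z.1 = 0 := le_antisymm (hz.2.2.trans h1) hz.2.1
      simpa using this
    have hnull : volume S = 0 := by
      refine measure_mono_null hSsub ?_
      rw [Measure.volume_eq_prod, Measure.prod_prod]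
      simp
    have heq : (fun α : ℝ => (1 - α) * ∫ z in S,
        Real.sqrt (z.1 ^ 2 + ‖z.2‖ ^ 2) ^ (-(N:ℝ) - α)) = fun _ => (0:ℝ) := by
      funext α
      rw [Measure.restrict_eq_zero.mpr hnull, integral_zero_measure, mul_zero]
    rw [heq, max_eq_right hB]
    simp only [mul_zero, zero_mul]
    exact tendsto_const_nhds
  · -- main case
    have hTarget : (1:ℝ) * max B' 0 * σ = σ * B' := by rw [max_eq_left hB.le]; ring
    rw [hTarget, Metric.tendsto_nhds]
    intro ε hε
    -- choose a small radius t
    have hcont : Tendsto (fun u : ℝ => (1 + B' ^ 2 * u ^ 2) ^ (-((N:ℝ) + 1) / 2) * (σ * B'))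
        (𝓝[>] (0:ℝ)) (𝓝 (σ * B')) := by
      have h1 : Tendsto (fun u : ℝ => 1 + B' ^ 2 * u ^ 2) (𝓝 0) (𝓝 1) := by
        have hc : Continuous fun u : ℝ => 1 + B' ^ 2 * u ^ 2 := by continuity
        simpa using hc.tendsto 0
      have h2 : Tendsto (fun u : ℝ => (1 + B' ^ 2 * u ^ 2) ^ (-((N:ℝ) + 1) / 2)) (𝓝 0) (𝓝 1) := by
        have h3 := (Real.continuousAt_rpow_const 1 (-((N:ℝ) + 1) / 2)
          (Or.inl one_ne_zero)).tendsto.comp h1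
        simpa [Real.one_rpow, Function.comp_def] using h3
      simpa using ((h2.mul_const (σ * B')).mono_left nhdsWithin_le_nhds)
    obtain ⟨t, htK, ht0, htδ'⟩ : ∃ t : ℝ,
        σ * B' - ε / 2 < (1 + B' ^ 2 * t ^ 2) ^ (-((N:ℝ) + 1) / 2) * (σ * B') ∧
          0 < t ∧ t ≤ δ := by
      have e1 := hcont.eventually (eventually_gt_nhds (show σ * B' - ε / 2 < σ * B' by linarith))
      have e2 : ∀ᶠ u in 𝓝[>] (0:ℝ), 0 < u := eventually_mem_nhdsWithin
      have e3 : ∀ᶠ u in 𝓝[>] (0:ℝ), u ≤ δ :=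
        Filter.eventually_of_mem (nhdsWithin_le_nhds (Iio_mem_nhds hδ)) fun u hu => le_of_lt hu
      obtain ⟨t, h1, h2, h3⟩ := (e1.and (e2.and e3)).exists
      exact ⟨t, h1, h2, h3⟩
    set K : ℝ := (1 + B' ^ 2 * t ^ 2) ^ (-((N:ℝ) + 1) / 2) with hKdef
    have hK0 : 0 ≤ K := Real.rpow_nonneg (by positivity) _
    -- bounds valid for every α ∈ (0,1)
    have hbound : ∀ α, α ∈ Ioo (0:ℝ) 1 →
        K * (σ * B' * t ^ (1 - α)) ≤ (1 - α) * ∫ z in S,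
            Real.sqrt (z.1 ^ 2 + ‖z.2‖ ^ 2) ^ (-(N:ℝ) - α) ∧
          (1 - α) * (∫ z in S, Real.sqrt (z.1 ^ 2 + ‖z.2‖ ^ 2) ^ (-(N:ℝ) - α))
            ≤ σ * B' * δ ^ (1 - α) := by
      intro α hα
      have h1α : 0 < 1 - α := by linarith [hα.2]
      have hne : (1:ℝ) - α ≠ 0 := h1α.ne'
      have hJ : ∫ z in S, Real.sqrt (z.1 ^ 2 + ‖z.2‖ ^ 2) ^ (-(N:ℝ) - α)
          = (∫⁻ z in S, ENNReal.ofReal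
              (Real.sqrt (z.1 ^ 2 + ‖z.2‖ ^ 2) ^ (-(N:ℝ) - α))).toReal := by
        rw [integral_eq_lintegral_of_nonneg_ae
          (Filter.Eventually.of_forall fun z => Real.rpow_nonneg (Real.sqrt_nonneg _) _)
          ((aux_fm N α).aestronglyMeasurable)]
      have hup := aux_up N hN hB hδ hα
      have hlow := aux_low N hN hB ht0 htδ' hα
      have hXδ : 0 ≤ B' * δ ^ (1 - α) / (1 - α) :=
        div_nonneg (mul_nonneg hB.le (Real.rpow_nonneg hδ.le _)) h1α.le
      have hXt : 0 ≤ B' * t ^ (1 - α) / (1 - α) :=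
        div_nonneg (mul_nonneg hB.le (Real.rpow_nonneg ht0.le _)) h1α.le
      have hRHS_ne : sigI * ENNReal.ofReal (B' * δ ^ (1 - α) / (1 - α)) ≠ ⊤ :=
        ENNReal.mul_ne_top hσfin ENNReal.ofReal_ne_top
      have hL_ne : (∫⁻ z in S, ENNReal.ofReal
          (Real.sqrt (z.1 ^ 2 + ‖z.2‖ ^ 2) ^ (-(N:ℝ) - α))) ≠ ⊤ :=
        ne_top_of_le_ne_top hRHS_ne hup
      have h2 := ENNReal.toReal_mono hRHS_ne hup
      rw [ENNReal.toReal_mul, ENNReal.toReal_ofReal hXδ] at h2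
      have h3 := ENNReal.toReal_mono hL_ne hlow
      rw [ENNReal.toReal_mul, ENNReal.toReal_mul, ENNReal.toReal_ofReal hXt,
        ENNReal.toReal_ofReal hK0] at h3
      constructor
      · calc K * (σ * B' * t ^ (1 - α))
            = (1 - α) * (K * (σ * (B' * t ^ (1 - α) / (1 - α)))) := by
              have hX : (1 - α) * (B' * t ^ (1 - α) / (1 - α)) = B' * t ^ (1 - α) := by
                rw [show (1 - α) * (B' * t ^ (1 - α) / (1 - α))
                    = B' * t ^ (1 - α) * ((1 - α) / (1 - α)) from by ring, div_self hne, mul_one]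
              rw [show (1 - α) * (K * (σ * (B' * t ^ (1 - α) / (1 - α))))
                  = K * (σ * ((1 - α) * (B' * t ^ (1 - α) / (1 - α)))) from by ring, hX]
              ring
            _ ≤ (1 - α) * ∫ z in S,
                Real.sqrt (z.1 ^ 2 + ‖z.2‖ ^ 2) ^ (-(N:ℝ) - α) := by
              refine mul_le_mul_of_nonneg_left ?_ h1α.le
              rw [hJ]
              exact h3
      · calc (1 - α) * (∫ z in S, Real.sqrt (z.1 ^ 2 + ‖z.2‖ ^ 2) ^ (-(N:ℝ) - α))
            ≤ (1 - α) * (σ * (B' * δ ^ (1 - α) / (1 - α))) := by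
              refine mul_le_mul_of_nonneg_left ?_ h1α.le
              rw [hJ]
              exact h2
          _ = σ * B' * δ ^ (1 - α) := by field_simp
    have ev1 : ∀ᶠ α in 𝓝[<] (1:ℝ), α ∈ Ioo (0:ℝ) 1 :=
      Filter.eventually_of_mem (Ioo_mem_nhdsLT_of_mem (Set.mem_Ioc.mpr ⟨one_pos, le_rfl⟩))
        fun α hα => hα
    have ev2 : ∀ᶠ α in 𝓝[<] (1:ℝ), σ * B' * δ ^ (1 - α) < σ * B' + ε := by
      have hc : Tendsto (fun α : ℝ => δ ^ (1 - α)) (𝓝 1) (𝓝 1) := by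
        have hc1 : Continuous fun α : ℝ => 1 - α := by continuity
        have := (Real.continuousAt_const_rpow (a := δ) (b := (0:ℝ)) hδ.ne').tendsto.comp
          (by simpa using hc1.tendsto 1)
        simpa [Real.rpow_zero, Function.comp_def] using this
      have hT : Tendsto (fun α : ℝ => σ * B' * δ ^ (1 - α)) (𝓝[<] (1:ℝ)) (𝓝 (σ * B')) := by
        simpa using ((hc.const_mul (σ * B')).mono_left nhdsWithin_le_nhds)
      exact hT.eventually (eventually_lt_nhds (by linarith))
    have ev3 : ∀ᶠ α in 𝓝[<] (1:ℝ), σ * B' - ε < K * (σ * B' * t ^ (1 - α)) := by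
      have hc : Tendsto (fun α : ℝ => t ^ (1 - α)) (𝓝 1) (𝓝 1) := by
        have hc1 : Continuous fun α : ℝ => 1 - α := by continuity
        have := (Real.continuousAt_const_rpow (a := t) (b := (0:ℝ)) ht0.ne').tendsto.comp
          (by simpa using hc1.tendsto 1)
        simpa [Real.rpow_zero, Function.comp_def] using this
      have hT : Tendsto (fun α : ℝ => K * (σ * B' * t ^ (1 - α))) (𝓝[<] (1:ℝ))
          (𝓝 (K * (σ * B'))) := by
        have h4 : Tendsto (fun α : ℝ => σ * B' * t ^ (1 - α)) (𝓝 (1:ℝ)) (𝓝 (σ * B')) := by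
          simpa using hc.const_mul (σ * B')
        simpa using ((h4.const_mul K).mono_left nhdsWithin_le_nhds)
      exact hT.eventually (eventually_gt_nhds (by linarith))
    filter_upwards [ev1, ev2, ev3] with α hα h2 h3
    obtain ⟨hl, hu⟩ := hbound α hα
    rw [Real.dist_eq, abs_sub_lt_iff]
    constructor <;> linarith
end
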